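/- arXiv:math/0211305 — 7 statements merged into one kernel-verified Lean document; each statement's English description precedes it below -/
import Mathlib

section
/- Let d, N be positive integers, m ≥ 0, μ > 0, ε > 0, and s ∈ ℂ. Let a : ℝ^d × ℝ^N → ℝ be a real-valued symbol of type (1,0) and order m with a(x,ξ) ≥ ε for all (x,ξ) and a(x,ξ) ≥ μ^{-1}·⟨ξ⟩^m whenever ‖ξ‖ ≥ μ. Then the complex power (x,ξ) ↦ a(x,ξ)^s := exp(s·log a(x,ξ)) is a symbol of type (1,0) and order m·Re(s). -/
set_option maxHeartbeats 2000000


/-- `⟨ξ⟩ := (1 + ‖ξ‖²)^{1/2}`. -/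
noncomputable def jap {N : ℕ} (ξ : EuclideanSpace ℝ (Fin N)) : ℝ :=
  (1 + ‖ξ‖ ^ 2) ^ ((1 : ℝ) / 2)

/-- `a : ℝ^d × ℝ^N → F` is a symbol of type `(1,0)` and order `m`:
it is smooth, and for all `j, l` the iterated derivative of order `j` in `x`
and order `l` in `ξ` is bounded by `C(j,l) ⟨ξ⟩^{m-l}`. -/
def IsSymbol (d N : ℕ) (m : ℝ) {F : Type*} [NormedAddCommGroup F] [NormedSpace ℝ F]
    (a : EuclideanSpace ℝ (Fin d) → EuclideanSpace ℝ (Fin N) → F) : Prop :=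
  ContDiff ℝ (⊤ : ℕ∞)
      (fun p : EuclideanSpace ℝ (Fin d) × EuclideanSpace ℝ (Fin N) => a p.1 p.2) ∧
    ∀ j l : ℕ, ∃ C : ℝ, ∀ (x : EuclideanSpace ℝ (Fin d)) (ξ : EuclideanSpace ℝ (Fin N)),
      ‖iteratedFDeriv ℝ j (fun x' => iteratedFDeriv ℝ l (fun ξ' => a x' ξ') ξ) x‖ ≤
        C * jap ξ ^ (m - l)



open List

section NDer

variable {E F G : Type*} [NormedAddCommGroup E] [NormedSpace ℝ E]
  [NormedAddCommGroup F] [NormedSpace ℝ F] [NormedAddCommGroup G] [NormedSpace ℝ G]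

/-- Nested directional derivative along a list of directions. -/
noncomputable def nder : List E → (E → F) → E → F
  | [], f => f
  | v :: l, f => fun x => fderiv ℝ (nder l f) x v

@[simp] theorem nder_nil (f : E → F) : nder [] f = f := rfl

theorem nder_cons (v : E) (l : List E) (f : E → F) :
    nder (v :: l) f = fun x => fderiv ℝ (nder l f) x v := rfl

theorem nder_contDiff (l : List E) {f : E → F} (hf : ContDiff ℝ (⊤ : ℕ∞) f) :
    ContDiff ℝ (⊤ : ℕ∞) (nder l f) := by
  induction l with
  | nil => exact hf
  | cons v l ih =>
    have h1 : ContDiff ℝ (⊤ : ℕ∞) (fderiv ℝ (nder l f)) := by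
      apply ih.fderiv_right
      norm_cast
    exact (ContinuousLinearMap.apply ℝ F v).contDiff.comp h1

theorem nder_differentiableAt (l : List E) {f : E → F} (hf : ContDiff ℝ (⊤ : ℕ∞) f) (x : E) :
    DifferentiableAt ℝ (nder l f) x :=
  ((nder_contDiff l hf).differentiable (by norm_cast <;> exact le_top)).differentiableAt

theorem nder_clm_comp (c : F →L[ℝ] G) (l : List E) {f : E → F} (hf : ContDiff ℝ (⊤ : ℕ∞) f) :
    nder l (fun x => c (f x)) = fun x => c (nder l f x) := by
  induction l with
  | nil => rfl
  | cons v l ih =>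
    funext x
    show fderiv ℝ (nder l fun x => c (f x)) x v = c (fderiv ℝ (nder l f) x v)
    rw [ih]
    have h := (c.hasFDerivAt (x := nder l f x)).comp x
      (nder_differentiableAt l hf x).hasFDerivAt
    rw [show (fun x => c (nder l f x)) = c ∘ nder l f from rfl, h.fderiv]
    rfl

theorem iteratedFDeriv_eq_nder {n : ℕ} {f : E → F} (hf : ContDiff ℝ (⊤ : ℕ∞) f) (x : E)
    (m : Fin n → E) : iteratedFDeriv ℝ n f x m = nder (List.ofFn m) f x := by
  induction n generalizing x with
  | zero => simp [iteratedFDeriv_zero_apply]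
  | succ n ih =>
    rw [iteratedFDeriv_succ_apply_left]
    have hsm : ContDiff ℝ (⊤ : ℕ∞) (iteratedFDeriv ℝ n f) :=
      hf.iteratedFDeriv_right (by norm_cast <;> exact le_top)
    set c := ContinuousMultilinearMap.apply ℝ (fun _ : Fin n => E) F (Fin.tail m) with hc
    have h1 : (fderiv ℝ (iteratedFDeriv ℝ n f) x (m 0)) (Fin.tail m)
        = c (fderiv ℝ (iteratedFDeriv ℝ n f) x (m 0)) := rfl
    have h2 := (c.hasFDerivAt (x := iteratedFDeriv ℝ n f x)).comp x
      ((hsm.differentiable (by norm_cast <;> exact le_top)).differentiableAt).hasFDerivAt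
    have h3 : (fun y => c (iteratedFDeriv ℝ n f y)) = fun y => nder (List.ofFn (Fin.tail m)) f y := by
      funext y
      exact ih y (m := Fin.tail m)
    rw [h1, show c (fderiv ℝ (iteratedFDeriv ℝ n f) x (m 0))
        = fderiv ℝ (c ∘ iteratedFDeriv ℝ n f) x (m 0) by rw [h2.fderiv]; rfl]
    rw [show c ∘ iteratedFDeriv ℝ n f = fun y => nder (List.ofFn (Fin.tail m)) f y from h3]
    rw [List.ofFn_succ]
    rfl

theorem nder_comp_affine (T₀ : E →L[ℝ] G) (b : G) (l : List E) {f : G → F}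
    (hf : ContDiff ℝ (⊤ : ℕ∞) f) (x : E) :
    nder l (fun y => f (b + T₀ y)) x = nder (l.map T₀) f (b + T₀ x) := by
  have hT : ContDiff ℝ (⊤ : ℕ∞) (fun y : E => b + T₀ y) := contDiff_const.add T₀.contDiff
  induction l generalizing x with
  | nil => rfl
  | cons v l ih =>
    have h1 : nder l (fun y => f (b + T₀ y)) = fun x => nder (l.map T₀) f (b + T₀ x) :=
      funext fun y => ih y
    show fderiv ℝ (nder l fun y => f (b + T₀ y)) x v = _
    rw [h1]
    have hD := (nder_differentiableAt (l.map T₀) hf (b + T₀ x)).hasFDerivAt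
    have hT' : HasFDerivAt (fun y : E => b + T₀ y) T₀ x := T₀.hasFDerivAt.const_add b
    have h2 := hD.comp x hT'
    rw [show (fun x => nder (l.map T₀) f (b + T₀ x))
        = nder (l.map T₀) f ∘ fun y => b + T₀ y from rfl, h2.fderiv]
    rfl

theorem nder_append (l₁ l₂ : List E) (f : E → F) :
    nder (l₁ ++ l₂) f = nder l₁ (nder l₂ f) := by
  induction l₁ with
  | nil => rfl
  | cons v l ih => funext x; show fderiv ℝ (nder (l ++ l₂) f) x v = _; rw [ih]; rfl

theorem nder_swap {f : E → F} (hf : ContDiff ℝ (⊤ : ℕ∞) f) (v w : E) :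
    nder (v :: w :: []) f = nder (w :: v :: []) f := by
  have key : ∀ v w x, fderiv ℝ (fun y => fderiv ℝ f y w) x v
      = fderiv ℝ (fderiv ℝ f) x v w := by
    intro v w x
    have hd : ContDiff ℝ (⊤ : ℕ∞) (fderiv ℝ f) :=
      hf.fderiv_right (by norm_cast)
    have h2 := ((ContinuousLinearMap.apply ℝ F w).hasFDerivAt
      (x := fderiv ℝ f x)).comp x
      ((hd.differentiable (by norm_cast <;> exact le_top)).differentiableAt).hasFDerivAt
    rw [show (fun y => fderiv ℝ f y w)
        = (ContinuousLinearMap.apply ℝ F w) ∘ fderiv ℝ f from rfl, h2.fderiv]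
    rfl
  funext x
  show fderiv ℝ (fun y => fderiv ℝ f y w) x v = fderiv ℝ (fun y => fderiv ℝ f y v) x w
  rw [key, key]
  exact (hf.contDiffAt.isSymmSndFDerivAt (by rw [minSmoothness_of_isRCLikeNormedField]; exact WithTop.coe_le_coe.mpr (le_top : (2:ℕ∞) ≤ ⊤))).eq v w

theorem nder_swap_cons {f : E → F} (hf : ContDiff ℝ (⊤ : ℕ∞) f) (v w : E) (l : List E) :
    nder (v :: w :: l) f = nder (w :: v :: l) f := by
  have h := nder_swap (nder_contDiff l hf) v w
  have h1 : nder (v :: w :: l) f = nder (v :: w :: []) (nder l f) := by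
    rw [show v :: w :: l = (v :: w :: []) ++ l from rfl, nder_append]
  have h2 : nder (w :: v :: l) f = nder (w :: v :: []) (nder l f) := by
    rw [show w :: v :: l = (w :: v :: []) ++ l from rfl, nder_append]
  rw [h1, h2, h]

theorem nder_perm {l l' : List E} (h : l.Perm l') {f : E → F} (hf : ContDiff ℝ (⊤ : ℕ∞) f) :
    nder l f = nder l' f := by
  induction h with
  | nil => rfl
  | cons v _ ih => funext x; show fderiv ℝ _ x v = fderiv ℝ _ x v; rw [ih]
  | swap v w l => exact nder_swap_cons hf w v l
  | trans _ _ ih1 ih2 => rw [ih1, ih2]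

end NDer
section NDer2

variable {E F G : Type*} [NormedAddCommGroup E] [NormedSpace ℝ E]
  [NormedAddCommGroup F] [NormedSpace ℝ F] [NormedAddCommGroup G] [NormedSpace ℝ G]

theorem nder_cons_add (a b : E) (l : List E) (f : E → F) :
    nder ((a + b) :: l) f = nder (a :: l) f + nder (b :: l) f := by
  funext x
  exact (fderiv ℝ (nder l f) x).map_add a b

theorem nder_cons_smul (t : ℝ) (a : E) (l : List E) (f : E → F) :
    nder ((t • a) :: l) f = t • nder (a :: l) f := by
  funext x
  exact (fderiv ℝ (nder l f) x).map_smul t a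

theorem nder_fun_add (l : List E) {f g : E → F} (hf : ContDiff ℝ (⊤ : ℕ∞) f)
    (hg : ContDiff ℝ (⊤ : ℕ∞) g) : nder l (f + g) = nder l f + nder l g := by
  induction l with
  | nil => rfl
  | cons v l ih =>
    funext x
    show fderiv ℝ (nder l (f + g)) x v = fderiv ℝ (nder l f) x v + fderiv ℝ (nder l g) x v
    rw [ih, show nder l f + nder l g = fun y => nder l f y + nder l g y from rfl,
      fderiv_fun_add (nder_differentiableAt l hf x) (nder_differentiableAt l hg x)]
    rfl

theorem nder_fun_smul (l : List E) (c : ℝ) {f : E → F} (hf : ContDiff ℝ (⊤ : ℕ∞) f) :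
    nder l (c • f) = c • nder l f := by
  induction l with
  | nil => rfl
  | cons v l ih =>
    funext x
    show fderiv ℝ (nder l (c • f)) x v = c • fderiv ℝ (nder l f) x v
    rw [ih, show c • nder l f = fun y => c • nder l f y from rfl,
      fderiv_fun_const_smul (nder_differentiableAt l hf x)]
    rfl

theorem nder_insert_add (l₁ l₂ : List E) (a b : E) {f : E → F}
    (hf : ContDiff ℝ (⊤ : ℕ∞) f) :
    nder (l₁ ++ (a + b) :: l₂) f = nder (l₁ ++ a :: l₂) f + nder (l₁ ++ b :: l₂) f := by
  rw [nder_append, nder_append, nder_append, nder_cons_add,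
    nder_fun_add l₁ (nder_contDiff (a :: l₂) hf) (nder_contDiff (b :: l₂) hf)]

theorem nder_insert_smul (l₁ l₂ : List E) (t : ℝ) (a : E) {f : E → F}
    (hf : ContDiff ℝ (⊤ : ℕ∞) f) :
    nder (l₁ ++ (t • a) :: l₂) f = t • nder (l₁ ++ a :: l₂) f := by
  rw [nder_append, nder_append, nder_cons_smul,
    nder_fun_smul l₁ t (nder_contDiff (a :: l₂) hf)]

theorem nder_map_smul_list (t : ℝ) {f : E → F} (hf : ContDiff ℝ (⊤ : ℕ∞) f) :
    ∀ (l₂ l₁ : List E),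
      nder (l₁ ++ l₂.map (fun w => t • w)) f = t ^ l₂.length • nder (l₁ ++ l₂) f := by
  intro l₂
  induction l₂ with
  | nil => intro l₁; simp
  | cons a l₂ ih =>
    intro l₁
    have h1 : l₁ ++ (a :: l₂).map (fun w => t • w)
        = (l₁ ++ [t • a]) ++ l₂.map (fun w => t • w) := by simp
    rw [h1, ih (l₁ ++ [t • a])]
    have h2 : (l₁ ++ [t • a]) ++ l₂ = l₁ ++ (t • a) :: l₂ := by simp
    rw [h2, nder_insert_smul l₁ l₂ t a hf]
    rw [smul_smul, show l₁ ++ a :: l₂ = l₁ ++ a :: l₂ from rfl]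
    rw [List.length_cons, pow_succ, mul_comm (t ^ l₂.length) t]

theorem nder_le_opNorm (L : List E) {f : E → F} (hf : ContDiff ℝ (⊤ : ℕ∞) f) (x : E) :
    ‖nder L f x‖ ≤ ‖iteratedFDeriv ℝ L.length f x‖ * (L.map norm).prod := by
  have h1 : nder L f x = iteratedFDeriv ℝ L.length f x (fun i => L.get i) := by
    rw [iteratedFDeriv_eq_nder hf x (fun i => L.get i), List.ofFn_get]
  rw [h1]
  have h2 := (iteratedFDeriv ℝ L.length f x).le_opNorm (fun i => L.get i)
  refine h2.trans (le_of_eq ?_)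
  congr 1
  rw [show L.map norm = List.ofFn (fun i => ‖L.get i‖) by
    conv_lhs => rw [← List.ofFn_get L]
    rw [List.map_ofFn]; rfl]
  rw [List.prod_ofFn]

end NDer2

section Mixed

variable {E F G : Type*} [NormedAddCommGroup E] [NormedSpace ℝ E]
  [NormedAddCommGroup F] [NormedSpace ℝ F] [NormedAddCommGroup G] [NormedSpace ℝ G]

theorem slice_contDiff {g : E → G → F} (hg : ContDiff ℝ (⊤ : ℕ∞) fun p : E × G => g p.1 p.2)
    (x : E) : ContDiff ℝ (⊤ : ℕ∞) (fun ξ : G => g x ξ) :=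
  hg.comp (contDiff_const.prodMk contDiff_id)

/-- The mixed iterated derivative expressed as a nested directional derivative of the
function on the product space. -/
theorem mixed_eq_nder {g : E → G → F} (hg : ContDiff ℝ (⊤ : ℕ∞) fun p : E × G => g p.1 p.2)
    (j l : ℕ) (x : E) (ξ : G) (u : Fin j → E) (v : Fin l → G) :
    iteratedFDeriv ℝ j (fun x' => iteratedFDeriv ℝ l (fun ξ' => g x' ξ') ξ) x u v
      = nder ((List.ofFn u).map (ContinuousLinearMap.inl ℝ E G)
          ++ (List.ofFn v).map (ContinuousLinearMap.inr ℝ E G))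
          (fun p : E × G => g p.1 p.2) (x, ξ) := by
  set A : (E × G) → F := fun p => g p.1 p.2 with hA
  set inl := ContinuousLinearMap.inl ℝ E G
  set inr := ContinuousLinearMap.inr ℝ E G
  -- step c : pointwise identity for the inner derivative
  have stepc : ∀ (x' : E) (w : Fin l → G), iteratedFDeriv ℝ l (fun ξ' => g x' ξ') ξ w
      = nder ((List.ofFn w).map inr) A (x', ξ) := by
    intro x' w
    have hsl : ContDiff ℝ (⊤ : ℕ∞) (fun ξ' : G => g x' ξ') := slice_contDiff hg x'
    rw [iteratedFDeriv_eq_nder hsl ξ w]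
    have h1 : (fun ξ' : G => g x' ξ') = fun ξ' => A ((x', 0) + inr ξ') := by
      funext ξ'; simp [hA, inl, inr, Prod.mk_add_mk]
    rw [h1, nder_comp_affine inr (x', (0 : G)) (List.ofFn w) hg ξ]
    congr 1
    simp [inr, Prod.mk_add_mk]
  -- Ψ : smooth version of the inner derivative as a function on the product
  set Ψ : (E × G) → ContinuousMultilinearMap ℝ (fun _ : Fin l => G) F := fun p =>
    (iteratedFDeriv ℝ l A p).compContinuousLinearMap (fun _ => inr) with hΨ
  have hΨs : ContDiff ℝ (⊤ : ℕ∞) Ψ := by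
    have h1 : Ψ = fun p => ContinuousMultilinearMap.compContinuousLinearMapL (fun _ : Fin l => inr)
        (iteratedFDeriv ℝ l A p) := by
      funext p
      rw [ContinuousMultilinearMap.compContinuousLinearMapL_apply]
    rw [h1]
    exact (ContinuousMultilinearMap.compContinuousLinearMapL fun _ : Fin l => inr).contDiff.comp
      (hg.iteratedFDeriv_right (n := ((⊤:ℕ∞) : WithTop ℕ∞)) (m := ((⊤:ℕ∞) : WithTop ℕ∞)) (by norm_cast))
  have hinner : (fun x' => iteratedFDeriv ℝ l (fun ξ' => g x' ξ') ξ)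
      = fun x' => Ψ (x', ξ) := by
    funext x'
    refine ContinuousMultilinearMap.ext fun w => ?_
    rw [stepc x' w, hΨ]
    rw [ContinuousMultilinearMap.compContinuousLinearMap_apply]
    rw [iteratedFDeriv_eq_nder hg (x', ξ) (fun i => inr (w i))]
    congr 1
    rw [List.map_ofFn]
    rfl
  have hΨξ : ContDiff ℝ (⊤ : ℕ∞) (fun x' : E => Ψ (x', ξ)) :=
    hΨs.comp (contDiff_id.prodMk contDiff_const)
  rw [hinner]
  rw [iteratedFDeriv_eq_nder hΨξ x u]
  -- push the application at `v` inside
  have happ := nder_clm_comp (ContinuousMultilinearMap.apply ℝ (fun _ : Fin l => G) F v)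
      (List.ofFn u) hΨξ
  have h2 : nder (List.ofFn u) (fun x' : E => Ψ (x', ξ)) x v
      = nder (List.ofFn u) (fun x' : E => Ψ (x', ξ) v) x := (congrFun happ x).symm
  rw [h2]
  -- identify `Ψ (x', ξ) v` with the nested derivative along `inr`-directions
  have h4 : (fun x' : E => Ψ (x', ξ) v)
      = fun x' : E => nder ((List.ofFn v).map inr) A (x', ξ) := by
    funext x'
    rw [← stepc x' v, ← congrFun hinner x']
  rw [h4]
  -- convert the outer derivative into nested derivatives along `inl`-directions
  have hnv : ContDiff ℝ (⊤ : ℕ∞) (nder ((List.ofFn v).map inr) A) := by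
    exact nder_contDiff _ hg
  have h5 : (fun x' : E => nder ((List.ofFn v).map inr) A (x', ξ))
      = fun x' : E => (nder ((List.ofFn v).map inr) A) ((0, ξ) + inl x') := by
    funext x'; simp [inl, Prod.mk_add_mk]
  rw [h5, nder_comp_affine inl ((0 : E), ξ) (List.ofFn u) hnv x, ← nder_append]
  congr 1
  simp [inl, Prod.mk_add_mk]

end Mixed
section Fpow

/-- The complex power `r ↦ r^s` on the positive reals. -/
noncomputable def Fc (s : ℂ) : ℝ → ℂ := fun r => Complex.exp (s * (Real.log r : ℂ))

theorem Fc_contDiffAt (s : ℂ) {r : ℝ} (hr : 0 < r) : ContDiffAt ℝ (⊤ : ℕ∞) (Fc s) r := by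
  have h1 : ContDiffAt ℝ (⊤ : ℕ∞) Real.log r := Real.contDiffAt_log.mpr hr.ne'
  have h2 : ContDiffAt ℝ (⊤ : ℕ∞) (fun y : ℝ => ((Real.log y : ℝ) : ℂ)) r :=
    Complex.ofRealCLM.contDiff.contDiffAt.comp r h1
  have h3 : ContDiffAt ℝ (⊤ : ℕ∞) (fun y : ℝ => s * ((Real.log y : ℝ) : ℂ)) r :=
    contDiffAt_const.mul h2
  exact (Complex.contDiff_exp (𝕜 := ℝ)).contDiffAt.comp r h3

theorem Fc_iteratedDeriv (s : ℂ) : ∀ (i : ℕ) {r : ℝ}, 0 < r →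
    iteratedDeriv i (Fc s) r
      = (∏ k ∈ Finset.range i, (s - k)) * Complex.exp ((s - i) * (Real.log r : ℂ)) := by
  intro i
  induction i with
  | zero => intro r hr; simp [iteratedDeriv_zero, Fc]
  | succ i ih =>
    intro r hr
    rw [iteratedDeriv_succ]
    have hev : iteratedDeriv i (Fc s) =ᶠ[nhds r] fun y =>
        (∏ k ∈ Finset.range i, (s - k)) * Complex.exp ((s - i) * (Real.log y : ℂ)) := by
      filter_upwards [isOpen_Ioi.mem_nhds hr] with y hy
      exact ih hy
    rw [hev.deriv_eq]
    have h1 : HasDerivAt (fun y : ℝ => Real.log y) r⁻¹ r := Real.hasDerivAt_log hr.ne'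
    have h2 : HasDerivAt (fun y : ℝ => ((Real.log y : ℝ) : ℂ)) ((r⁻¹ : ℝ) : ℂ) r :=
      h1.ofReal_comp
    have h3 := h2.const_mul (s - i)
    have h4 := h3.cexp
    have h5 := h4.const_mul (∏ k ∈ Finset.range i, (s - k))
    rw [h5.deriv]
    rw [Finset.prod_range_succ]
    have hexp : Complex.exp ((s - ((i : ℕ) + 1 : ℕ)) * (Real.log r : ℂ))
        = Complex.exp ((s - i) * (Real.log r : ℂ)) * ((r : ℂ))⁻¹ := by
      have he : ((s - ((i : ℕ) + 1 : ℕ)) * (Real.log r : ℂ))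
          = (s - i) * (Real.log r : ℂ) + (-(Real.log r : ℂ)) := by push_cast; ring
      rw [he, Complex.exp_add, Complex.exp_neg]
      congr 1
      rw [← Complex.ofReal_exp, Real.exp_log hr]
    rw [hexp]
    push_cast
    ring

theorem Fc_norm_one (s : ℂ) (i : ℕ) :
    ‖iteratedDeriv i (Fc s) 1‖ = ‖∏ k ∈ Finset.range i, (s - k)‖ := by
  rw [Fc_iteratedDeriv s i one_pos]
  simp [Real.log_one]

theorem Fc_prod_bound (s : ℂ) (n : ℕ) : ∀ i ≤ n,
    ‖∏ k ∈ Finset.range i, (s - k)‖ ≤ ∏ k ∈ Finset.range n, (‖s‖ + k + 1) := by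
  intro i hi
  calc ‖∏ k ∈ Finset.range i, (s - (k : ℂ))‖ = ∏ k ∈ Finset.range i, ‖s - (k : ℂ)‖ := by
        rw [norm_prod]
    _ ≤ ∏ k ∈ Finset.range i, (‖s‖ + k + 1) := by
        refine Finset.prod_le_prod (fun k _ => norm_nonneg _) (fun k _ => ?_)
        calc ‖s - (k : ℂ)‖ ≤ ‖s‖ + ‖(k : ℂ)‖ := norm_sub_le _ _
          _ = ‖s‖ + k := by rw [Complex.norm_natCast]
          _ ≤ ‖s‖ + k + 1 := by linarith
    _ ≤ ∏ k ∈ Finset.range n, (‖s‖ + k + 1) := by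
        rw [← Finset.prod_range_mul_prod_Ico (fun k : ℕ => (‖s‖ + k + 1)) hi]
        have h1 : (1:ℝ) ≤ ∏ k ∈ Finset.Ico i n, (‖s‖ + k + 1) := by
          calc (1:ℝ) = ∏ _k ∈ Finset.Ico i n, (1:ℝ) := by simp
            _ ≤ ∏ k ∈ Finset.Ico i n, (‖s‖ + k + 1) := by
                refine Finset.prod_le_prod (fun _ _ => zero_le_one) (fun k _ => ?_)
                have h0 : (0:ℝ) ≤ (k:ℝ) := Nat.cast_nonneg k
                nlinarith [norm_nonneg s]
        have h2 : (0:ℝ) ≤ ∏ k ∈ Finset.range i, (‖s‖ + k + 1) := by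
          refine Finset.prod_nonneg (fun k _ => ?_)
          have h0 : (0:ℝ) ≤ (k:ℝ) := Nat.cast_nonneg k
          nlinarith [norm_nonneg s]
        nlinarith

theorem Fc_one_le_prod (s : ℂ) (n : ℕ) : (1:ℝ) ≤ ∏ k ∈ Finset.range n, (‖s‖ + k + 1) := by
  calc (1:ℝ) = ∏ _k ∈ Finset.range n, (1:ℝ) := by simp
    _ ≤ ∏ k ∈ Finset.range n, (‖s‖ + k + 1) := by
        refine Finset.prod_le_prod (fun _ _ => zero_le_one) (fun k _ => ?_)
        have h0 : (0:ℝ) ≤ (k:ℝ) := Nat.cast_nonneg k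
        nlinarith [norm_nonneg s]

/-- small helper : product of a list map with constant multiple -/
theorem list_prod_map_mul_const {α : Type*} (c : ℝ) (f : α → ℝ) (L : List α) :
    (L.map (fun y => c * f y)).prod = c ^ L.length * (L.map f).prod := by
  induction L with
  | nil => simp
  | cons a L ih => simp [ih, pow_succ]; ring

theorem prod_map_norm_eq {E : Type*} [NormedAddCommGroup E] (L : List E) :
    (L.map norm).prod = ∏ i, ‖L.get i‖ := by
  conv_lhs => rw [← List.ofFn_get L]
  rw [List.map_ofFn, List.prod_ofFn]
  rfl

end Fpow
theorem jap_pos {N : ℕ} (ξ : EuclideanSpace ℝ (Fin N)) : 0 < jap ξ :=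
  Real.rpow_pos_of_pos (by positivity) _

theorem jap_one_le {N : ℕ} (ξ : EuclideanSpace ℝ (Fin N)) : 1 ≤ jap ξ := by
  have h : (1:ℝ) ≤ 1 + ‖ξ‖ ^ 2 := by nlinarith [sq_nonneg ‖ξ‖]
  calc (1:ℝ) = (1:ℝ) ^ ((1:ℝ)/2) := (Real.one_rpow _).symm
    _ ≤ (1 + ‖ξ‖^2) ^ ((1:ℝ)/2) := Real.rpow_le_rpow zero_le_one h (by norm_num)


/-- If `a` is a real-valued, `μ`-elliptic symbol of type `(1,0)` and order `m ≥ 0`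
with `a ≥ ε > 0` everywhere, then the complex power `a^s = exp(s · log a)` is a
symbol of type `(1,0)` and order `m·Re(s)`. -/
theorem statement2 (d N : ℕ) (hd : 0 < d) (hN : 0 < N) (m μ ε : ℝ) (s : ℂ)
    (hm : 0 ≤ m) (hμ : 0 < μ) (hε : 0 < ε)
    (a : EuclideanSpace ℝ (Fin d) → EuclideanSpace ℝ (Fin N) → ℝ)
    (ha : IsSymbol d N m a)
    (hlb : ∀ x ξ, ε ≤ a x ξ)
    (hell : ∀ x ξ, μ ≤ ‖ξ‖ → μ⁻¹ * jap ξ ^ m ≤ a x ξ) :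
    IsSymbol d N (m * s.re)
      (fun x ξ => Complex.exp (s * Complex.log ((a x ξ : ℝ) : ℂ))) := by
  classical
  obtain ⟨hasm, hbd⟩ := ha
  have haxi : ∀ x ξ, 0 < a x ξ := fun x ξ => lt_of_lt_of_le hε (hlb x ξ)
  have hgfun : (fun (x : EuclideanSpace ℝ (Fin d)) (ξ : EuclideanSpace ℝ (Fin N)) =>
      Complex.exp (s * Complex.log ((a x ξ : ℝ) : ℂ))) = fun x ξ => Fc s (a x ξ) := by
    funext x ξ
    rw [Fc, Complex.ofReal_log (haxi x ξ).le]
  rw [hgfun]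
  have hA : ContDiff ℝ (⊤ : ℕ∞)
      (fun p : EuclideanSpace ℝ (Fin d) × EuclideanSpace ℝ (Fin N) => a p.1 p.2) := hasm
  have hapos : ∀ p : EuclideanSpace ℝ (Fin d) × EuclideanSpace ℝ (Fin N),
      0 < a p.1 p.2 := fun p => haxi p.1 p.2
  have hGf : ContDiff ℝ (⊤ : ℕ∞)
      (fun p : EuclideanSpace ℝ (Fin d) × EuclideanSpace ℝ (Fin N) => Fc s (a p.1 p.2)) := by
    refine contDiff_iff_contDiffAt.mpr fun p => ?_
    exact ContDiffAt.comp (g := Fc s) p (Fc_contDiffAt s (haxi p.1 p.2)) hA.contDiffAt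
  refine ⟨hGf, ?_⟩
  intro j l
  -- basic jap facts
  have hjm : ∀ ξ : EuclideanSpace ℝ (Fin N), 0 < jap ξ ^ m :=
    fun ξ => Real.rpow_pos_of_pos (jap_pos ξ) m
  -- the lower ellipticity constant
  set celow : ℝ := min μ⁻¹ (ε * (1 + μ^2) ^ (-(m/2))) with hcelowdef
  have hcel0 : 0 < celow :=
    lt_min (inv_pos.mpr hμ) (mul_pos hε (Real.rpow_pos_of_pos (by positivity) _))
  have hcel : ∀ x ξ, celow * jap ξ ^ m ≤ a x ξ := by
    intro x ξ
    rcases le_or_gt μ ‖ξ‖ with hle | hlt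
    · refine le_trans ?_ (hell x ξ hle)
      exact mul_le_mul_of_nonneg_right (min_le_left _ _) (hjm ξ).le
    · have h2 : jap ξ ^ m = (1 + ‖ξ‖^2) ^ (m/2) := by
        rw [jap, ← Real.rpow_mul (by positivity)]
        congr 1
        ring
      have h1 : jap ξ ^ m ≤ (1 + μ^2) ^ (m/2) := by
        rw [h2]
        refine Real.rpow_le_rpow (by positivity) ?_ (by positivity)
        have h3 := pow_le_pow_left₀ (norm_nonneg ξ) hlt.le 2
        linarith
      calc celow * jap ξ ^ m ≤ (ε * (1 + μ^2) ^ (-(m/2))) * (1 + μ^2) ^ (m/2) := by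
            apply mul_le_mul (min_le_right _ _) h1 (hjm ξ).le (by positivity)
        _ = ε := by
            rw [mul_assoc, ← Real.rpow_add (by positivity)]
            norm_num
        _ ≤ a x ξ := hlb x ξ
  -- constants
  set n := j + l with hndef
  set Cc : ℕ → ℕ → ℝ := fun j' l' => max 0 (Classical.choose (hbd j' l')) with hCcdef
  have hCc0 : ∀ j' l', 0 ≤ Cc j' l' := fun _ _ => le_max_left _ _
  have hCc : ∀ j' l' x ξ, ‖iteratedFDeriv ℝ j'
      (fun x' => iteratedFDeriv ℝ l' (fun ξ' => a x' ξ') ξ) x‖ ≤ Cc j' l' * jap ξ ^ (m - l') := by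
    intro j' l' x ξ
    refine (Classical.choose_spec (hbd j' l') x ξ).trans ?_
    exact mul_le_mul_of_nonneg_right (le_max_right _ _) (Real.rpow_nonneg (jap_pos ξ).le _)
  set Cn : ℝ := 1 + ∑ j' ∈ Finset.range (n+1), ∑ l' ∈ Finset.range (n+1), Cc j' l' with hCndef
  have hsum0 : ∀ j', 0 ≤ ∑ l' ∈ Finset.range (n+1), Cc j' l' :=
    fun j' => Finset.sum_nonneg fun _ _ => hCc0 _ _
  have hCn1 : (1:ℝ) ≤ Cn := le_add_of_nonneg_right (Finset.sum_nonneg fun j' _ => hsum0 j')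
  have hCn0 : 0 < Cn := lt_of_lt_of_le one_pos hCn1
  have hCnC : ∀ j' l', j' ≤ n → l' ≤ n → Cc j' l' ≤ Cn := by
    intro j' l' hj hl
    have h1 : Cc j' l' ≤ ∑ l'' ∈ Finset.range (n+1), Cc j' l'' :=
      Finset.single_le_sum (fun i _ => hCc0 j' i) (Finset.mem_range.mpr (Nat.lt_succ_of_le hl))
    have h2 : ∑ l'' ∈ Finset.range (n+1), Cc j' l'' ≤
        ∑ j'' ∈ Finset.range (n+1), ∑ l'' ∈ Finset.range (n+1), Cc j'' l'' :=
      Finset.single_le_sum (fun i _ => hsum0 i) (Finset.mem_range.mpr (Nat.lt_succ_of_le hj))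
    rw [hCndef]
    linarith
  set CF : ℝ := ∏ k ∈ Finset.range n, (‖s‖ + k + 1) with hCFdef
  have hCF1 : (1:ℝ) ≤ CF := Fc_one_le_prod s n
  set Dn : ℝ := 2 * max 1 (Cn / celow) with hDndef
  have hDn0 : 0 < Dn := mul_pos two_pos (lt_of_lt_of_le one_pos (le_max_left _ _))
  set K : ℝ := max (Cn ^ s.re) (celow ^ s.re) with hKdef
  have hK0 : 0 < K := lt_of_lt_of_le (Real.rpow_pos_of_pos hCn0 _) (le_max_left _ _)
  refine ⟨K * ((n.factorial : ℝ) * CF * Dn ^ n), ?_⟩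
  intro x ξ₀
  set t := jap ξ₀ with htdef
  have ht0 : 0 < t := jap_pos ξ₀
  have ht1 : 1 ≤ t := jap_one_le ξ₀
  set r := a x ξ₀ with hrdef
  have hr0 : 0 < r := haxi x ξ₀
  have hrc : celow * t ^ m ≤ r := hcel x ξ₀
  have hrC : r ≤ Cn * t ^ m := by
    have h1 := hCc 0 0 x ξ₀
    rw [norm_iteratedFDeriv_zero, norm_iteratedFDeriv_zero] at h1
    have h2 : r ≤ Cc 0 0 * t ^ m := by
      have h3 : m - ((0:ℕ):ℝ) = m := by norm_num
      rw [h3] at h1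
      calc r ≤ |r| := le_abs_self r
        _ ≤ Cc 0 0 * t ^ m := h1
    exact h2.trans (mul_le_mul_of_nonneg_right
      (hCnC 0 0 (Nat.zero_le n) (Nat.zero_le n)) (hjm ξ₀).le)
  -- the linear maps
  set inlm := ContinuousLinearMap.inl ℝ (EuclideanSpace ℝ (Fin d)) (EuclideanSpace ℝ (Fin N))
    with hinlmdef
  set inrm := ContinuousLinearMap.inr ℝ (EuclideanSpace ℝ (Fin d)) (EuclideanSpace ℝ (Fin N))
    with hinrmdef
  set T₀ := (ContinuousLinearMap.fst ℝ (EuclideanSpace ℝ (Fin d)) (EuclideanSpace ℝ (Fin N))).prod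
    (t • ContinuousLinearMap.snd ℝ (EuclideanSpace ℝ (Fin d)) (EuclideanSpace ℝ (Fin N)))
    with hT₀def
  set Tb : EuclideanSpace ℝ (Fin d) × EuclideanSpace ℝ (Fin N) := ((0 : _), ξ₀) with hTbdef
  have hT₀app : ∀ q : EuclideanSpace ℝ (Fin d) × EuclideanSpace ℝ (Fin N),
      T₀ q = (q.1, t • q.2) := by
    intro q
    rw [hT₀def]
    rfl
  have hTx : Tb + T₀ ((x, (0 : EuclideanSpace ℝ (Fin N)))) = (x, ξ₀) := by
    rw [hT₀app, hTbdef]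
    simp [Prod.mk_add_mk]
  set Ab : EuclideanSpace ℝ (Fin d) × EuclideanSpace ℝ (Fin N) → ℝ :=
    fun q => (fun p : EuclideanSpace ℝ (Fin d) × EuclideanSpace ℝ (Fin N) => a p.1 p.2)
      (Tb + T₀ q) with hAbdef
  have hAb : ContDiff ℝ (⊤ : ℕ∞) Ab := hA.comp (contDiff_const.add T₀.contDiff)
  have hAbx : Ab ((x, (0 : EuclideanSpace ℝ (Fin N)))) = r := by
    rw [hAbdef]
    simp only [hTx, hrdef]
  -- the weight
  set W : EuclideanSpace ℝ (Fin d) × EuclideanSpace ℝ (Fin N) → ℝ :=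
    fun c => ‖c.1‖ + t⁻¹ * ‖c.2‖ with hWdef
  have hW0 : ∀ c, 0 ≤ W c := fun c =>
    add_nonneg (norm_nonneg _) (mul_nonneg (inv_nonneg.mpr ht0.le) (norm_nonneg _))
  -- the sorted-list bound coming from the symbol hypothesis
  have hJ : ∀ (us : List (EuclideanSpace ℝ (Fin d))) (vs : List (EuclideanSpace ℝ (Fin N))),
      us.length ≤ n → vs.length ≤ n →
      ‖nder (us.map inlm ++ vs.map inrm)
          (fun p : EuclideanSpace ℝ (Fin d) × EuclideanSpace ℝ (Fin N) => a p.1 p.2) (x, ξ₀)‖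
        ≤ Cn * jap ξ₀ ^ (m - vs.length) * ((us.map norm).prod * (vs.map norm).prod) := by
    intro us vs hus hvs
    have hmx := mixed_eq_nder (g := fun x' ξ' => a x' ξ') hA us.length vs.length x ξ₀
      us.get vs.get
    rw [List.ofFn_get, List.ofFn_get] at hmx
    rw [← hinlmdef, ← hinrmdef] at hmx
    rw [← hmx]
    have h1 := (iteratedFDeriv ℝ us.length
      (fun x' => iteratedFDeriv ℝ vs.length (fun ξ' => a x' ξ') ξ₀) x us.get).le_opNorm vs.get
    have h2 := (iteratedFDeriv ℝ us.length
      (fun x' => iteratedFDeriv ℝ vs.length (fun ξ' => a x' ξ') ξ₀) x).le_opNorm us.get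
    have h3 := hCc us.length vs.length x ξ₀
    rw [prod_map_norm_eq us, prod_map_norm_eq vs]
    have h4 : ‖iteratedFDeriv ℝ us.length
        (fun x' => iteratedFDeriv ℝ vs.length (fun ξ' => a x' ξ') ξ₀) x us.get‖
        ≤ Cn * jap ξ₀ ^ (m - vs.length) * ∏ i', ‖us.get i'‖ := by
      refine h2.trans ?_
      refine mul_le_mul_of_nonneg_right ?_ (Finset.prod_nonneg fun _ _ => norm_nonneg _)
      exact h3.trans (mul_le_mul_of_nonneg_right (hCnC _ _ hus hvs)
        (Real.rpow_nonneg (jap_pos ξ₀).le _))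
    refine h1.trans ?_
    refine (mul_le_mul_of_nonneg_right h4
      (Finset.prod_nonneg fun _ _ => norm_nonneg _)).trans (le_of_eq ?_)
    ring
  -- the pure-list bound (sorting by a permutation)
  have hJpure : ∀ (l₁ : List (EuclideanSpace ℝ (Fin d) × EuclideanSpace ℝ (Fin N))),
      (∀ c ∈ l₁, c.1 = 0 ∨ c.2 = 0) → l₁.length ≤ n →
      ‖nder l₁ (fun p : EuclideanSpace ℝ (Fin d) × EuclideanSpace ℝ (Fin N) => a p.1 p.2)
          (x, ξ₀)‖ ≤ Cn * t ^ m * (l₁.map W).prod := by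
    intro l₁ hpure hlen
    set p : EuclideanSpace ℝ (Fin d) × EuclideanSpace ℝ (Fin N) → Bool :=
      fun c => decide (c.2 = 0) with hpdef
    have hperm := List.filter_append_perm p l₁
    set us := (l₁.filter p).map Prod.fst with husdef
    set vs := (l₁.filter fun c => !p c).map Prod.snd with hvsdef
    have hmem1 : ∀ c ∈ l₁.filter p, c.2 = 0 := by
      intro c hc
      simpa [hpdef] using (List.mem_filter.mp hc).2
    have hmem2 : ∀ c ∈ l₁.filter (fun c => !p c), c.1 = 0 := by
      intro c hc
      have h2 : ¬ (c.2 = 0) := by simpa [hpdef] using (List.mem_filter.mp hc).2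
      rcases hpure c (List.mem_of_mem_filter hc) with h | h
      · exact h
      · exact absurd h h2
    have hfl : us.map inlm = l₁.filter p := by
      rw [husdef, List.map_map]
      have h5 : ∀ c ∈ l₁.filter p, (inlm ∘ Prod.fst) c = id c := by
        intro c hc
        show inlm c.1 = c
        rw [hinlmdef]
        exact Prod.ext (by simp) (by simp [hmem1 c hc])
      rw [List.map_congr_left h5, List.map_id]
    have hfr : vs.map inrm = l₁.filter (fun c => !p c) := by
      rw [hvsdef, List.map_map]
      have h5 : ∀ c ∈ l₁.filter (fun c => !p c), (inrm ∘ Prod.snd) c = id c := by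
        intro c hc
        show inrm c.2 = c
        rw [hinrmdef]
        exact Prod.ext (by simp [hmem2 c hc]) (by simp)
      rw [List.map_congr_left h5, List.map_id]
    have hus : us.length ≤ n := by
      rw [husdef, List.length_map]
      exact (l₁.length_filter_le p).trans hlen
    have hvs : vs.length ≤ n := by
      rw [hvsdef, List.length_map]
      exact (l₁.length_filter_le _).trans hlen
    have hnd : nder l₁ (fun p : EuclideanSpace ℝ (Fin d) × EuclideanSpace ℝ (Fin N) =>
        a p.1 p.2) = nder (us.map inlm ++ vs.map inrm)
        (fun p : EuclideanSpace ℝ (Fin d) × EuclideanSpace ℝ (Fin N) => a p.1 p.2) := by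
      rw [hfl, hfr]
      exact (nder_perm hperm hA).symm
    rw [hnd]
    refine (hJ us vs hus hvs).trans (le_of_eq ?_)
    -- identify the weight products
    have hW1 : ((l₁.filter p).map W).prod = (us.map norm).prod := by
      rw [husdef, List.map_map]
      refine congrArg List.prod (List.map_congr_left ?_)
      intro c hc
      show W c = ‖c.1‖
      rw [hWdef]
      simp [hmem1 c hc]
    have hW2 : ((l₁.filter (fun c => !p c)).map W).prod
        = t⁻¹ ^ vs.length * (vs.map norm).prod := by
      have h6 : (l₁.filter (fun c => !p c)).map W
          = (l₁.filter (fun c => !p c)).map (fun c => t⁻¹ * ‖c.2‖) := by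
        refine List.map_congr_left ?_
        intro c hc
        show W c = t⁻¹ * ‖c.2‖
        rw [hWdef]
        simp [hmem2 c hc]
      have h7 := list_prod_map_mul_const t⁻¹
        (fun c : EuclideanSpace ℝ (Fin d) × EuclideanSpace ℝ (Fin N) => ‖c.2‖)
        (l₁.filter (fun c => !p c))
      rw [h6, h7]
      congr 1
      · rw [hvsdef, List.length_map]
      · rw [hvsdef, List.map_map]
        rfl
    have hWprod : (l₁.map W).prod
        = (us.map norm).prod * (t⁻¹ ^ vs.length * (vs.map norm).prod) := by
      rw [← hW1, ← hW2, ← List.prod_append, ← List.map_append]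
      exact ((hperm.map W).prod_eq).symm
    have hexp : jap ξ₀ ^ (m - vs.length) = t ^ m * t⁻¹ ^ vs.length := by
      rw [← htdef, Real.rpow_sub ht0, Real.rpow_natCast, div_eq_mul_inv, inv_pow]
    rw [hexp, hWprod]
    ring
  -- the expansion bound for general lists
  have hKB : ∀ (l₂ : List (EuclideanSpace ℝ (Fin d) × EuclideanSpace ℝ (Fin N)))
      (l₁ : List (EuclideanSpace ℝ (Fin d) × EuclideanSpace ℝ (Fin N))),
      (∀ c ∈ l₁, c.1 = 0 ∨ c.2 = 0) → l₁.length + l₂.length ≤ n →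
      ‖nder (l₁ ++ l₂) (fun p : EuclideanSpace ℝ (Fin d) × EuclideanSpace ℝ (Fin N) =>
        a p.1 p.2) (x, ξ₀)‖ ≤ Cn * t ^ m * ((l₁ ++ l₂).map W).prod := by
    intro l₂
    induction l₂ with
    | nil =>
      intro l₁ hp hl
      simpa using hJpure l₁ hp (by simpa using hl)
    | cons c l₂ ih =>
      intro l₁ hp hl
      have hcdec : c = ((c.1, (0 : EuclideanSpace ℝ (Fin N))) : _ × _)
          + (((0 : EuclideanSpace ℝ (Fin d)), c.2) : _ × _) := by
        rw [Prod.mk_add_mk]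
        simp
      have hlist : l₁ ++ c :: l₂
          = l₁ ++ ((c.1, (0 : EuclideanSpace ℝ (Fin N)))
            + ((0 : EuclideanSpace ℝ (Fin d)), c.2)) :: l₂ := by rw [← hcdec]
      rw [hlist, nder_insert_add l₁ l₂ _ _ hA]
      rw [Pi.add_apply]
      refine (norm_add_le _ _).trans ?_
      have hl1 : (l₁ ++ [((c.1, (0 : EuclideanSpace ℝ (Fin N)))
          : EuclideanSpace ℝ (Fin d) × EuclideanSpace ℝ (Fin N))]).length + l₂.length ≤ n := by
        simp only [List.length_append, List.length_cons, List.length_nil] at hl ⊢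
        omega
      have hl2 : (l₁ ++ [(((0 : EuclideanSpace ℝ (Fin d)), c.2)
          : EuclideanSpace ℝ (Fin d) × EuclideanSpace ℝ (Fin N))]).length + l₂.length ≤ n := by
        simp only [List.length_append, List.length_cons, List.length_nil] at hl ⊢
        omega
      have hp1 : ∀ c' ∈ l₁ ++ [((c.1, (0 : EuclideanSpace ℝ (Fin N)))
          : EuclideanSpace ℝ (Fin d) × EuclideanSpace ℝ (Fin N))], c'.1 = 0 ∨ c'.2 = 0 := by
        intro c' hc'
        rcases List.mem_append.mp hc' with h | h
        · exact hp c' h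
        · right; rw [List.mem_singleton.mp h]
      have hp2 : ∀ c' ∈ l₁ ++ [(((0 : EuclideanSpace ℝ (Fin d)), c.2)
          : EuclideanSpace ℝ (Fin d) × EuclideanSpace ℝ (Fin N))], c'.1 = 0 ∨ c'.2 = 0 := by
        intro c' hc'
        rcases List.mem_append.mp hc' with h | h
        · exact hp c' h
        · left; rw [List.mem_singleton.mp h]
      have h1 := ih (l₁ ++ [((c.1, (0 : EuclideanSpace ℝ (Fin N))))]) hp1 hl1
      have h2 := ih (l₁ ++ [(((0 : EuclideanSpace ℝ (Fin d)), c.2))]) hp2 hl2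
      rw [List.append_assoc, List.singleton_append] at h1 h2
      refine (add_le_add h1 h2).trans (le_of_eq ?_)
      have hWc : W ((c.1, (0 : EuclideanSpace ℝ (Fin N))))
          + W (((0 : EuclideanSpace ℝ (Fin d)), c.2)) = W c := by
        rw [hWdef]
        simp
      simp only [List.map_append, List.prod_append, List.map_cons, List.prod_cons]
      rw [← hcdec, ← hWc]
      ring
  -- key bound on full derivatives of the rescaled symbol
  have hkeyB : ∀ i : ℕ, i ≤ n →
      ‖iteratedFDeriv ℝ i Ab ((x, (0 : EuclideanSpace ℝ (Fin N))))‖ ≤ Cn * t ^ m * 2 ^ i := by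
    intro i hi
    refine (ContinuousMultilinearMap.opNorm_le_iff ?_).mpr ?_
    · have := (hjm ξ₀).le
      positivity
    intro w
    have e1 : iteratedFDeriv ℝ i Ab ((x, (0 : EuclideanSpace ℝ (Fin N)))) w
        = nder ((List.ofFn w).map T₀)
          (fun p : EuclideanSpace ℝ (Fin d) × EuclideanSpace ℝ (Fin N) => a p.1 p.2) (x, ξ₀) := by
      rw [iteratedFDeriv_eq_nder hAb _ w, hAbdef]
      rw [nder_comp_affine T₀ Tb (List.ofFn w) hA ((x, (0 : EuclideanSpace ℝ (Fin N)))), hTx]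
    rw [e1]
    have h2 := hKB ((List.ofFn w).map T₀) [] (by simp) (by
      simp only [List.length_nil, List.length_map, List.length_ofFn, zero_add]
      exact hi)
    simp only [List.nil_append] at h2
    refine h2.trans ?_
    have h3 : (((List.ofFn w).map T₀).map W).prod = ∏ i', W (T₀ (w i')) := by
      rw [List.map_map, List.map_ofFn]
      exact List.prod_ofFn
    have h4 : ∀ i', W (T₀ (w i')) ≤ 2 * ‖w i'‖ := by
      intro i'
      have e2 : W (T₀ (w i')) = ‖(w i').1‖ + ‖(w i').2‖ := by
        rw [hT₀app, hWdef]
        show ‖(w i').1‖ + t⁻¹ * ‖t • (w i').2‖ = _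
        rw [norm_smul, Real.norm_eq_abs, abs_of_pos ht0, inv_mul_cancel_left₀ ht0.ne']
      rw [e2]
      have hf1 := norm_fst_le (w i')
      have hf2 := norm_snd_le (w i')
      have : (2:ℝ) * ‖w i'‖ = ‖w i'‖ + ‖w i'‖ := by ring
      linarith
    have h5 : (((List.ofFn w).map T₀).map W).prod ≤ 2 ^ i * ∏ i', ‖w i'‖ := by
      rw [h3]
      calc (∏ i', W (T₀ (w i'))) ≤ ∏ i', (2 * ‖w i'‖) :=
            Finset.prod_le_prod (fun i' _ => hW0 _) (fun i' _ => h4 i')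
        _ = 2 ^ i * ∏ i', ‖w i'‖ := by
            rw [Finset.prod_mul_distrib, Finset.prod_const]
            simp [Finset.card_univ]
    calc Cn * t ^ m * (((List.ofFn w).map T₀).map W).prod
        ≤ Cn * t ^ m * (2 ^ i * ∏ i', ‖w i'‖) := by
          refine mul_le_mul_of_nonneg_left h5 ?_
          have := (hjm ξ₀).le
          positivity
      _ = Cn * t ^ m * 2 ^ i * ∏ i', ‖w i'‖ := by ring
  -- the normalized symbol
  set B : EuclideanSpace ℝ (Fin d) × EuclideanSpace ℝ (Fin N) → ℝ :=
    fun q => r⁻¹ * Ab q with hBdef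
  have hBs : ContDiff ℝ (⊤ : ℕ∞) B := contDiff_const.mul hAb
  have hBpos : ∀ q, 0 < B q := fun q => mul_pos (inv_pos.mpr hr0) (hapos _)
  have hB1 : B ((x, (0 : EuclideanSpace ℝ (Fin N)))) = 1 := by
    rw [hBdef]
    show r⁻¹ * Ab _ = 1
    rw [hAbx, inv_mul_cancel₀ hr0.ne']
  set c₀ : ℂ := Complex.exp (s * (Real.log r : ℂ)) with hc₀def
  have hFcB : ContDiff ℝ (⊤ : ℕ∞) (fun q => Fc s (B q)) :=
    contDiff_iff_contDiffAt.mpr fun q => (Fc_contDiffAt s (hBpos q)).comp q hBs.contDiffAt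
  set Gt : EuclideanSpace ℝ (Fin d) × EuclideanSpace ℝ (Fin N) → ℂ :=
    fun q => (fun p : EuclideanSpace ℝ (Fin d) × EuclideanSpace ℝ (Fin N) => Fc s (a p.1 p.2))
      (Tb + T₀ q) with hGtdef
  have hGts : ContDiff ℝ (⊤ : ℕ∞) Gt := hGf.comp (contDiff_const.add T₀.contDiff)
  have hGdec : Gt = fun q => c₀ • Fc s (B q) := by
    funext q
    have hAbq : 0 < Ab q := hapos _
    have hlog : Real.log (Ab q) = Real.log r + Real.log (B q) := by
      rw [hBdef]
      show _ = _ + Real.log (r⁻¹ * Ab q)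
      rw [Real.log_mul (inv_ne_zero hr0.ne') hAbq.ne', Real.log_inv]
      ring
    show Fc s (Ab q) = c₀ • Fc s (B q)
    rw [smul_eq_mul, Fc, Fc, hc₀def, ← Complex.exp_add, hlog]
    congr 1
    push_cast
    ring
  -- Faà di Bruno bound
  have hfaa : ‖iteratedFDeriv ℝ n (fun q => Fc s (B q))
      ((x, (0 : EuclideanSpace ℝ (Fin N))))‖ ≤ (n.factorial : ℝ) * CF * Dn ^ n := by
    have hcomp : (fun q => Fc s (B q)) = Fc s ∘ B := rfl
    rw [hcomp, ← iteratedFDerivWithin_univ]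
    refine norm_iteratedFDerivWithin_comp_le (N := ((⊤:ℕ∞) : WithTop ℕ∞)) (t := Set.Ioi (0:ℝ))
      (fun y hy => (Fc_contDiffAt s hy).contDiffWithinAt) hBs.contDiffOn
      (by norm_cast <;> exact le_top)
      (isOpen_Ioi.uniqueDiffOn) uniqueDiffOn_univ (fun q _ => hBpos q) (Set.mem_univ _) ?_ ?_
    · intro i hi
      show ‖iteratedFDerivWithin ℝ i (Fc s) (Set.Ioi 0) (B _)‖ ≤ CF
      rw [hB1]
      rw [iteratedFDerivWithin_of_isOpen i isOpen_Ioi (by norm_num : (1:ℝ) ∈ Set.Ioi 0)]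
      rw [norm_iteratedFDeriv_eq_norm_iteratedDeriv, Fc_norm_one]
      exact Fc_prod_bound s n i hi
    · intro i h1i hin
      rw [iteratedFDerivWithin_univ]
      have e3 : iteratedFDeriv ℝ i B ((x, (0 : EuclideanSpace ℝ (Fin N))))
          = r⁻¹ • iteratedFDeriv ℝ i Ab ((x, (0 : EuclideanSpace ℝ (Fin N)))) := by
        have hBsm : B = r⁻¹ • Ab := rfl
        rw [hBsm, iteratedFDeriv_const_smul_apply (hAb.of_le (by norm_cast <;> exact le_top)).contDiffAt]
      rw [e3, norm_smul r⁻¹ (iteratedFDeriv ℝ i Ab ((x, (0 : EuclideanSpace ℝ (Fin N)))))]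
      have h5 : ‖(r⁻¹:ℝ)‖ = r⁻¹ := by rw [Real.norm_eq_abs, abs_of_pos (inv_pos.mpr hr0)]
      rw [h5]
      have h6 := hkeyB i hin
      have h7 : r⁻¹ * ‖iteratedFDeriv ℝ i Ab ((x, (0 : EuclideanSpace ℝ (Fin N))))‖
          ≤ r⁻¹ * (Cn * t ^ m * 2 ^ i) :=
        mul_le_mul_of_nonneg_left h6 (inv_nonneg.mpr hr0.le)
      refine h7.trans ?_
      have h8 : r⁻¹ ≤ (celow * t ^ m)⁻¹ := by
        refine inv_anti₀ (mul_pos hcel0 (hjm ξ₀)) hrc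
      have h9 : r⁻¹ * (Cn * t ^ m * 2 ^ i) ≤ (celow * t ^ m)⁻¹ * (Cn * t ^ m * 2 ^ i) := by
        refine mul_le_mul_of_nonneg_right h8 ?_
        have := (hjm ξ₀).le
        positivity
      refine h9.trans ?_
      have h10 : (celow * t ^ m)⁻¹ * (Cn * t ^ m * 2 ^ i) = (Cn / celow) * 2 ^ i := by
        rw [mul_inv]
        field_simp
      rw [h10]
      have h11 : Cn / celow ≤ max 1 (Cn / celow) := le_max_right _ _
      have h12 : max 1 (Cn / celow) ≤ (max 1 (Cn / celow)) ^ i :=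
        le_self_pow₀ (le_max_left _ _) (by omega)
      calc (Cn / celow) * 2 ^ i ≤ (max 1 (Cn / celow)) ^ i * 2 ^ i :=
            mul_le_mul_of_nonneg_right (h11.trans h12) (by positivity)
        _ = Dn ^ i := by rw [hDndef, mul_pow]; ring
  -- main chain
  have hCfin0 : (0:ℝ) ≤ K * ((n.factorial : ℝ) * CF * Dn ^ n) * jap ξ₀ ^ (m * s.re - l) := by
    have h1 : (0:ℝ) ≤ jap ξ₀ ^ (m * s.re - (l:ℝ)) := Real.rpow_nonneg (jap_pos ξ₀).le _
    have h2 : (0:ℝ) ≤ CF := le_trans zero_le_one hCF1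
    positivity
  refine (ContinuousMultilinearMap.opNorm_le_iff hCfin0).mpr ?_
  intro u
  have hprodu : (0:ℝ) ≤ ∏ i', ‖u i'‖ := Finset.prod_nonneg fun _ _ => norm_nonneg _
  refine (ContinuousMultilinearMap.opNorm_le_iff (mul_nonneg hCfin0 hprodu)).mpr ?_
  intro v
  have hprodv : (0:ℝ) ≤ ∏ i', ‖v i'‖ := Finset.prod_nonneg fun _ _ => norm_nonneg _
  have e0 : iteratedFDeriv ℝ j (fun x' => iteratedFDeriv ℝ l (fun ξ' => Fc s (a x' ξ')) ξ₀) x u v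
      = nder ((List.ofFn u).map inlm ++ (List.ofFn v).map inrm)
        (fun p : EuclideanSpace ℝ (Fin d) × EuclideanSpace ℝ (Fin N) => Fc s (a p.1 p.2))
        (x, ξ₀) :=
    mixed_eq_nder (g := fun x' ξ' => Fc s (a x' ξ')) hGf j l x ξ₀ u v
  rw [e0]
  set Lu := (List.ofFn u).map inlm with hLudef
  set Lv := (List.ofFn v).map inrm with hLvdef
  have hLvlen : Lv.length = l := by rw [hLvdef, List.length_map, List.length_ofFn]
  have hmapT : (Lu ++ Lv).map T₀ = Lu ++ Lv.map (fun w => t • w) := by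
    rw [List.map_append]
    congr 1
    · rw [hLudef, List.map_map]
      refine List.map_congr_left fun z _ => ?_
      show T₀ (inlm z) = inlm z
      rw [hT₀app, hinlmdef]
      simp
    · rw [hLvdef, List.map_map, List.map_map]
      refine List.map_congr_left fun z _ => ?_
      show T₀ (inrm z) = t • (inrm z)
      rw [hT₀app, hinrmdef]
      simp
  have haff := nder_comp_affine T₀ Tb (Lu ++ Lv) hGf ((x, (0 : EuclideanSpace ℝ (Fin N))))
  have hscale := congrFun (nder_map_smul_list t hGf Lv Lu) ((x, ξ₀))
  have e1 : nder (Lu ++ Lv) Gt ((x, (0 : EuclideanSpace ℝ (Fin N))))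
      = t ^ l • nder (Lu ++ Lv)
        (fun p : EuclideanSpace ℝ (Fin d) × EuclideanSpace ℝ (Fin N) => Fc s (a p.1 p.2))
        (x, ξ₀) := by
    rw [hGtdef]
    rw [haff, hTx, hmapT, hscale, hLvlen]
    rfl
  have e2 : ‖nder (Lu ++ Lv)
      (fun p : EuclideanSpace ℝ (Fin d) × EuclideanSpace ℝ (Fin N) => Fc s (a p.1 p.2))
      (x, ξ₀)‖ = (t ^ l)⁻¹ * ‖nder (Lu ++ Lv) Gt ((x, (0 : EuclideanSpace ℝ (Fin N))))‖ := by
    rw [e1, norm_smul, Real.norm_eq_abs, abs_of_pos (pow_pos ht0 l), ← mul_assoc,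
      inv_mul_cancel₀ (pow_pos ht0 l).ne', one_mul]
  rw [e2]
  have h4 := nder_le_opNorm (Lu ++ Lv) hGts ((x, (0 : EuclideanSpace ℝ (Fin N))))
  have hLlen : (Lu ++ Lv).length = n := by
    rw [List.length_append, hLvlen, hLudef, List.length_map, List.length_ofFn, hndef]
  rw [hLlen] at h4
  have hprod : ((Lu ++ Lv).map norm).prod = (∏ i', ‖u i'‖) * (∏ i', ‖v i'‖) := by
    rw [List.map_append, List.prod_append]
    congr 1
    · rw [hLudef, List.map_map, List.map_ofFn, List.prod_ofFn]
      refine Finset.prod_congr rfl fun i' _ => ?_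
      show ‖inlm (u i')‖ = ‖u i'‖
      rw [hinlmdef]
      show ‖((u i', (0 : EuclideanSpace ℝ (Fin N))) :
        EuclideanSpace ℝ (Fin d) × EuclideanSpace ℝ (Fin N))‖ = ‖u i'‖
      rw [Prod.norm_def]
      simp [max_eq_left (norm_nonneg _)]
    · rw [hLvdef, List.map_map, List.map_ofFn, List.prod_ofFn]
      refine Finset.prod_congr rfl fun i' _ => ?_
      show ‖inrm (v i')‖ = ‖v i'‖
      rw [hinrmdef]
      show ‖(((0 : EuclideanSpace ℝ (Fin d)), v i') :
        EuclideanSpace ℝ (Fin d) × EuclideanSpace ℝ (Fin N))‖ = ‖v i'‖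
      rw [Prod.norm_def]
      simp [max_eq_right (norm_nonneg _)]
  rw [hprod] at h4
  have e5 : ‖iteratedFDeriv ℝ n Gt ((x, (0 : EuclideanSpace ℝ (Fin N))))‖
      = ‖c₀‖ * ‖iteratedFDeriv ℝ n (fun q => Fc s (B q))
        ((x, (0 : EuclideanSpace ℝ (Fin N))))‖ := by
    have hGsm : Gt = c₀ • fun q => Fc s (B q) := hGdec
    rw [hGsm, iteratedFDeriv_const_smul_apply (hFcB.of_le (by norm_cast <;> exact le_top)).contDiffAt,
      norm_smul c₀ (iteratedFDeriv ℝ n (fun q => Fc s (B q))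
        ((x, (0 : EuclideanSpace ℝ (Fin N)))))]
  have e6 : ‖c₀‖ = r ^ s.re := by
    rw [hc₀def, Complex.norm_exp]
    have hre : (s * (Real.log r : ℂ)).re = s.re * Real.log r := by
      simp [Complex.mul_re]
    rw [hre, Real.rpow_def_of_pos hr0, mul_comm]
  have e7 : r ^ s.re ≤ K * t ^ (m * s.re) := by
    rcases le_or_gt 0 s.re with hs | hs
    · calc r ^ s.re ≤ (Cn * t ^ m) ^ s.re := Real.rpow_le_rpow hr0.le hrC hs
        _ = Cn ^ s.re * t ^ (m * s.re) := by
            rw [Real.mul_rpow hCn0.le (hjm ξ₀).le, Real.rpow_mul ht0.le]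
        _ ≤ K * t ^ (m * s.re) := by
            refine mul_le_mul_of_nonneg_right (le_max_left _ _) (Real.rpow_nonneg ht0.le _)
    · calc r ^ s.re ≤ (celow * t ^ m) ^ s.re :=
            Real.rpow_le_rpow_of_nonpos (mul_pos hcel0 (hjm ξ₀)) hrc hs.le
        _ = celow ^ s.re * t ^ (m * s.re) := by
            rw [Real.mul_rpow hcel0.le (hjm ξ₀).le, Real.rpow_mul ht0.le]
        _ ≤ K * t ^ (m * s.re) := by
            refine mul_le_mul_of_nonneg_right (le_max_right _ _) (Real.rpow_nonneg ht0.le _)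
  have hfacCF : (0:ℝ) ≤ (n.factorial : ℝ) * CF * Dn ^ n := by
    have h2 : (0:ℝ) ≤ CF := le_trans zero_le_one hCF1
    positivity
  have hstep1 : ‖nder (Lu ++ Lv) Gt ((x, (0 : EuclideanSpace ℝ (Fin N))))‖
      ≤ (r ^ s.re * ((n.factorial : ℝ) * CF * Dn ^ n)) * ((∏ i', ‖u i'‖) * (∏ i', ‖v i'‖)) := by
    refine h4.trans ?_
    refine mul_le_mul_of_nonneg_right ?_ (mul_nonneg hprodu hprodv)
    rw [e5, e6]
    exact mul_le_mul_of_nonneg_left hfaa (Real.rpow_nonneg hr0.le _)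
  have hstep2 : (t ^ l)⁻¹ * ‖nder (Lu ++ Lv) Gt ((x, (0 : EuclideanSpace ℝ (Fin N))))‖
      ≤ (t ^ l)⁻¹ * ((K * t ^ (m * s.re) * ((n.factorial : ℝ) * CF * Dn ^ n))
        * ((∏ i', ‖u i'‖) * (∏ i', ‖v i'‖))) := by
    refine mul_le_mul_of_nonneg_left ?_ (inv_nonneg.mpr (pow_pos ht0 l).le)
    refine hstep1.trans ?_
    refine mul_le_mul_of_nonneg_right ?_ (mul_nonneg hprodu hprodv)
    exact mul_le_mul_of_nonneg_right e7 hfacCF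
  refine hstep2.trans (le_of_eq ?_)
  have hexp2 : jap ξ₀ ^ (m * s.re - l) = t ^ (m * s.re) * (t ^ l)⁻¹ := by
    rw [← htdef, Real.rpow_sub ht0, Real.rpow_natCast, div_eq_mul_inv]
  rw [hexp2]
  ring
end

section
/- For every k ∈ ℕ and every ε ∈ (0,1] there is a constant C > 0 such that for all t ∈ ℝ with |t| ≥ 1 and all x ∈ ℝ, the k-th derivative of the function g_t : ℝ → ℂ, g_t(x) = (x + i·t)^{-1}, satisfies (1 + x²)^{(1−ε+k)/2}·|g_t^{(k)}(x)| ≤ C·|t|^{−ε}. Moreover, for every k ∈ ℕ there is C' > 0 with (1 + x²)^{(1+k)/2}·|g_t^{(k)}(x)| ≤ C' for all |t| ≥ 1 and all x ∈ ℝ. -/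
open Complex

lemma deriv_formula (c : ℂ) (hc : c.im ≠ 0) (k : ℕ) :
    iteratedDeriv k (fun y : ℝ => ((y:ℂ) + c)⁻¹) = fun x : ℝ =>
      (-1)^k * (k.factorial : ℂ) * ((x:ℂ) + c)^(-(k:ℤ)-1) := by
  have hne : ∀ x : ℝ, (x:ℂ) + c ≠ 0 := by
    intro x h
    apply hc
    have := congrArg Complex.im h
    simpa using this
  induction k with
  | zero =>
    funext x
    simp [zpow_neg, iteratedDeriv_zero]
  | succ n ih =>
    funext x
    rw [iteratedDeriv_succ, ih]
    have h1 : HasDerivAt (fun z : ℂ => (z + c) ^ (-(n:ℤ)-1))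
        ((((-(n:ℤ)-1) : ℤ) : ℂ) * ((x:ℂ)+c) ^ (-(n:ℤ)-1-1) * 1) x :=
      by have h := HasDerivAt.comp (x:ℂ) (hasDerivAt_zpow (-(n:ℤ)-1) ((x:ℂ)+c) (Or.inl (hne x)))
          ((hasDerivAt_id ((x:ℂ))).add_const c)
         exact h
    have h2 := ((h1.comp_ofReal).const_mul ((-1)^n * (n.factorial : ℂ))).deriv
    rw [show (fun x : ℝ => (-1)^n * (n.factorial : ℂ) * ((x:ℂ)+c)^(-(n:ℤ)-1)) =
        (fun x : ℝ => (-1)^n * (n.factorial : ℂ) * ((fun z : ℂ => (z + c) ^ (-(n:ℤ)-1)) x)) from rfl,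
      h2]
    rw [pow_succ, Nat.factorial_succ]
    push_cast
    ring_nf

lemma norm_formula (k : ℕ) (t x : ℝ) (ht : t ≠ 0) :
    ‖iteratedDeriv k (fun y : ℝ => ((y:ℂ) + t * Complex.I)⁻¹) x‖ =
      (k.factorial : ℝ) * (x^2 + t^2) ^ (-((1:ℝ)+k)/2) := by
  have hc : ((t : ℂ) * Complex.I).im ≠ 0 := by simpa using ht
  rw [deriv_formula _ hc]
  have hnorm : ‖(x:ℂ) + t * Complex.I‖ = (x^2 + t^2) ^ ((1:ℝ)/2) := by
    rw [← Real.sqrt_eq_rpow]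
    rw [Complex.norm_def, Complex.normSq_apply]
    simp
    ring_nf
  have hb : (0:ℝ) < x^2 + t^2 := by positivity
  rw [norm_mul, norm_mul, norm_zpow, hnorm]
  rw [← Real.rpow_intCast ((x^2+t^2) ^ ((1:ℝ)/2)), ← Real.rpow_mul hb.le]
  simp only [norm_pow, norm_neg, norm_one, one_pow, one_mul, Complex.norm_natCast]
  congr 1
  push_cast
  ring_nf

lemma key (k : ℕ) (δ : ℝ) (hδ0 : 0 ≤ δ) (hδ1 : δ ≤ 1) (t x : ℝ) (ht : 1 ≤ |t|) :
    (1 + x ^ 2) ^ ((1 - δ + k) / 2) *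
        ‖iteratedDeriv k (fun y : ℝ => ((y : ℂ) + t * Complex.I)⁻¹) x‖ ≤
      (k.factorial : ℝ) * |t| ^ (-δ) := by
  have ht0 : t ≠ 0 := by intro h; simp [h] at ht; linarith
  have ht2 : (1:ℝ) ≤ t^2 := by nlinarith [abs_nonneg t, _root_.sq_abs t]
  rw [norm_formula k t x ht0]
  have ha : (0:ℝ) < 1 + x^2 := by positivity
  have hb : (0:ℝ) < x^2 + t^2 := by positivity
  have hab : 1 + x^2 ≤ x^2 + t^2 := by linarith
  have h1 : (1 + x^2) ^ ((1 - δ + k)/2) ≤ (x^2 + t^2) ^ ((1 - δ + k)/2) := by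
    apply Real.rpow_le_rpow ha.le hab
    have : (0:ℝ) ≤ (k:ℝ) := Nat.cast_nonneg k
    linarith
  calc (1 + x ^ 2) ^ ((1 - δ + k) / 2) * ((k.factorial : ℝ) * (x^2 + t^2) ^ (-((1:ℝ)+k)/2))
      ≤ (x^2 + t^2) ^ ((1 - δ + k)/2) * ((k.factorial : ℝ) * (x^2 + t^2) ^ (-((1:ℝ)+k)/2)) := by
        apply mul_le_mul_of_nonneg_right h1
        positivity
    _ = (k.factorial : ℝ) * (x^2 + t^2) ^ (-δ/2) := by
        rw [mul_left_comm, ← Real.rpow_add hb]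
        ring_nf
    _ ≤ (k.factorial : ℝ) * (t^2) ^ (-δ/2) := by
        apply mul_le_mul_of_nonneg_left _ (Nat.cast_nonneg _)
        apply Real.rpow_le_rpow_of_nonpos (by linarith) (by nlinarith) (by linarith)
    _ = (k.factorial : ℝ) * |t| ^ (-δ) := by
        congr 1
        rw [← _root_.sq_abs t, ← Real.rpow_natCast |t| 2, ← Real.rpow_mul (abs_nonneg t)]
        ring_nf

/-- Estimates for the derivatives of `g_t(x) = (x + i t)⁻¹`, `|t| ≥ 1`: for every
`k ∈ ℕ` and `ε ∈ (0,1]` one has `(1+x²)^{(1-ε+k)/2} |g_t^{(k)}(x)| ≤ C |t|^{-ε}`,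
and for every `k` one has `(1+x²)^{(1+k)/2} |g_t^{(k)}(x)| ≤ C'`. -/
theorem statement4 (k : ℕ) :
    (∀ ε : ℝ, 0 < ε → ε ≤ 1 → ∃ C : ℝ, 0 < C ∧ ∀ t x : ℝ, 1 ≤ |t| →
      (1 + x ^ 2) ^ ((1 - ε + k) / 2) *
          ‖iteratedDeriv k (fun y : ℝ => ((y : ℂ) + t * Complex.I)⁻¹) x‖ ≤
        C * |t| ^ (-ε)) ∧
    (∃ C' : ℝ, 0 < C' ∧ ∀ t x : ℝ, 1 ≤ |t| →
      (1 + x ^ 2) ^ (((1 : ℝ) + k) / 2) *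
          ‖iteratedDeriv k (fun y : ℝ => ((y : ℂ) + t * Complex.I)⁻¹) x‖ ≤ C') := by
  constructor
  · intro ε hε0 hε1
    exact ⟨k.factorial, by positivity, fun t x ht => key k ε hε0.le hε1 t x ht⟩
  · refine ⟨k.factorial, by positivity, fun t x ht => ?_⟩
    have := key k 0 le_rfl zero_le_one t x ht
    have ht0 : t ≠ 0 := by intro h; simp [h] at ht; linarith
    rw [neg_zero, Real.rpow_zero, mul_one] at this
    convert this using 3
    ring
end

section
/- For each k ∈ ℕ, the map F_k from the open half-plane {z ∈ ℂ : Re z < 0} to the Banach space C_b([1,∞), ℂ) of bounded continuous complex-valued functions on [1,∞) with the supremum norm, defined by F_k(z)(x) = x^k·(d/dx)^k(x^z), is well defined (i.e. the indicated function of x is bounded and continuous on [1,∞) whenever Re z < 0) and is holomorphic, i.e. complex differentiable at every point of {Re z < 0}, with derivative F_k'(z)(x) = x^k·(d/dx)^k(x^z·log x). -/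
open Complex Filter Asymptotics Set

namespace St6

/-- Quadratic remainder bound for the complex exponential. -/
lemma norm_exp_sub_one_sub_le (u : ℂ) :
    ‖Complex.exp u - 1 - u‖ ≤ ‖u‖ ^ 2 * Real.exp ‖u‖ := by
  set s : Set ℂ := Metric.closedBall 0 ‖u‖ with hs
  have hconv : Convex ℝ s := convex_closedBall _ _
  have h0 : (0 : ℂ) ∈ s := by simp [hs]
  have hus : u ∈ s := by simp [hs]
  have hbnd : ∀ w ∈ s, ‖Complex.exp w‖ ≤ Real.exp ‖u‖ := by
    intro w hw
    rw [Complex.norm_exp]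
    exact Real.exp_le_exp.2 ((Complex.re_le_norm w).trans (by simpa [hs] using hw))
  have step1 : ∀ w ∈ s, ‖Complex.exp w - 1‖ ≤ Real.exp ‖u‖ * ‖u‖ := by
    intro w hw
    have := Convex.norm_image_sub_le_of_norm_hasDerivWithin_le
      (f := Complex.exp) (f' := Complex.exp)
      (fun x _ => (Complex.hasDerivAt_exp x).hasDerivWithinAt)
      (fun x hx => hbnd x hx) hconv h0 hw
    simp only [Complex.exp_zero, sub_zero] at this
    calc ‖Complex.exp w - 1‖ ≤ Real.exp ‖u‖ * ‖w‖ := this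
      _ ≤ Real.exp ‖u‖ * ‖u‖ := by
          have : ‖w‖ ≤ ‖u‖ := by simpa [hs] using hw
          exact mul_le_mul_of_nonneg_left this (Real.exp_nonneg _)
  have step2 := Convex.norm_image_sub_le_of_norm_hasDerivWithin_le
    (f := fun w : ℂ => Complex.exp w - w) (f' := fun w => Complex.exp w - 1)
    (fun x _ => ((Complex.hasDerivAt_exp x).sub (hasDerivAt_id x)).hasDerivWithinAt)
    (fun x hx => step1 x hx) hconv h0 hus
  simp only [Complex.exp_zero, sub_zero] at step2
  calc ‖Complex.exp u - 1 - u‖ = ‖Complex.exp u - u - 1‖ := by ring_nf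
    _ ≤ Real.exp ‖u‖ * ‖u‖ * ‖u‖ := step2
    _ = ‖u‖ ^ 2 * Real.exp ‖u‖ := by ring

/-- Derivative of `x ↦ (x : ℂ) ^ w` for real `x > 0`. -/
lemma hasDerivAt_real_cpow_const {x : ℝ} (hx : 0 < x) (w : ℂ) :
    HasDerivAt (fun y : ℝ => (y : ℂ) ^ w) (w * (x : ℂ) ^ (w - 1)) x := by
  rcases eq_or_ne w 0 with rfl | hw
  · simpa using hasDerivAt_const x (1 : ℂ)
  · have hr : w - 1 ≠ -1 := by
      simpa [sub_eq_neg_self] using hw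
    have h := (hasDerivAt_ofReal_cpow_const' hx.ne' hr).const_mul w
    simp only [sub_add_cancel] at h
    have hfun : (fun y : ℝ => w * ((y : ℂ) ^ w / w)) = fun y : ℝ => (y : ℂ) ^ w := by
      funext y; field_simp
    rwa [hfun] at h

/-- Derivative of `x ↦ Complex.log (x : ℂ)` for real `x > 0`. -/
lemma hasDerivAt_clog_real {x : ℝ} (hx : 0 < x) :
    HasDerivAt (fun y : ℝ => Complex.log (y : ℂ)) ((x : ℂ)⁻¹) x := by
  have h := (Real.hasDerivAt_log hx.ne').ofReal_comp
  have hev : (fun y : ℝ => Complex.log (y : ℂ)) =ᶠ[nhds x] fun y : ℝ => ((Real.log y : ℝ) : ℂ) := by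
    filter_upwards [eventually_gt_nhds hx] with y hy
    exact (Complex.ofReal_log hy.le).symm
  have := h.congr_of_eventuallyEq hev
  simpa using this

noncomputable def c : ℕ → ℂ → ℂ
  | 0, _ => 1
  | (k + 1), z => c k z * (z - k)

noncomputable def c' : ℕ → ℂ → ℂ
  | 0, _ => 0
  | (k + 1), z => c' k z * (z - k) + c k z

lemma hasDerivAt_c (k : ℕ) (z : ℂ) : HasDerivAt (c k) (c' k z) z := by
  induction k with
  | zero => simpa [c, c'] using hasDerivAt_const z (1 : ℂ)
  | succ k ih =>
    have h := ih.mul ((hasDerivAt_id z).sub_const (k : ℂ))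
    simp only [mul_one] at h
    exact h.congr_deriv (by simp [c'])

lemma iteratedDeriv_cpow (k : ℕ) (z : ℂ) : ∀ x : ℝ, 0 < x →
    iteratedDeriv k (fun y : ℝ => (y : ℂ) ^ z) x = c k z * (x : ℂ) ^ (z - (k : ℕ)) := by
  induction k with
  | zero => intro x hx; simp [c]
  | succ k ih =>
    intro x hx
    rw [iteratedDeriv_succ]
    have hev : iteratedDeriv k (fun y : ℝ => (y : ℂ) ^ z)
        =ᶠ[nhds x] fun y : ℝ => c k z * (y : ℂ) ^ (z - (k : ℕ)) := by
      filter_upwards [eventually_gt_nhds hx] with y hy using ih y hy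
    rw [hev.deriv_eq]
    rw [((hasDerivAt_real_cpow_const hx (z - (k : ℕ))).const_mul (c k z)).deriv]
    have hc : z - (k : ℕ) - 1 = z - ((k + 1 : ℕ) : ℂ) := by push_cast; ring
    rw [hc]
    simp [c]; ring

lemma iteratedDeriv_cpow_mul_log (k : ℕ) (z : ℂ) : ∀ x : ℝ, 0 < x →
    iteratedDeriv k (fun y : ℝ => (y : ℂ) ^ z * Complex.log (y : ℂ)) x
      = c' k z * (x : ℂ) ^ (z - (k : ℕ))
        + c k z * ((x : ℂ) ^ (z - (k : ℕ)) * Complex.log (x : ℂ)) := by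
  induction k with
  | zero => intro x hx; simp [c, c']
  | succ k ih =>
    intro x hx
    rw [iteratedDeriv_succ]
    have hev : iteratedDeriv k (fun y : ℝ => (y : ℂ) ^ z * Complex.log (y : ℂ))
        =ᶠ[nhds x] fun y : ℝ => c' k z * (y : ℂ) ^ (z - (k : ℕ))
          + c k z * ((y : ℂ) ^ (z - (k : ℕ)) * Complex.log (y : ℂ)) := by
      filter_upwards [eventually_gt_nhds hx] with y hy using ih y hy
    rw [hev.deriv_eq]
    have h1 := (hasDerivAt_real_cpow_const hx (z - (k : ℕ))).const_mul (c' k z)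
    have h2 := (((hasDerivAt_real_cpow_const hx (z - (k : ℕ))).mul
      (hasDerivAt_clog_real hx))).const_mul (c k z)
    have h12 : HasDerivAt (fun y : ℝ => c' k z * (y : ℂ) ^ (z - (k : ℕ))
      + c k z * ((y : ℂ) ^ (z - (k : ℕ)) * Complex.log (y : ℂ))) _ x := h1.add h2
    rw [h12.deriv]
    have hxc : (x : ℂ) ≠ 0 := by exact_mod_cast hx.ne'
    have hinv : (x : ℂ) ^ (z - (k : ℕ) - 1) = (x : ℂ) ^ (z - (k : ℕ)) * (x : ℂ)⁻¹ := by
      rw [show z - (k : ℕ) - 1 = (z - (k : ℕ)) + (-1) by ring, Complex.cpow_add _ _ hxc,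
        Complex.cpow_neg_one]
    have hc : z - (k : ℕ) - 1 = z - ((k + 1 : ℕ) : ℂ) := by push_cast; ring
    rw [← hinv, hc]
    simp only [c, c']
    ring



/-- The function `x ↦ x^z` as a bounded continuous function on `[1,∞)` (junk if `re z ≥ 0`). -/
noncomputable def phi (z : ℂ) : BoundedContinuousFunction (Set.Ici (1 : ℝ)) ℂ :=
  if hz : z.re < 0 then
    { toFun := fun x => ((x : ℝ) : ℂ) ^ z
      continuous_toFun := by
        rw [continuous_iff_continuousAt]
        intro x
        have hx1 : (1 : ℝ) ≤ (x : ℝ) := x.2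
        exact (Complex.continuousAt_ofReal_cpow_const _ _
          (Or.inr (by positivity))).comp continuous_subtype_val.continuousAt
      map_bounded' := by
        refine ⟨2, fun x y => ?_⟩
        have hb : ∀ t : Set.Ici (1 : ℝ), ‖((t : ℝ) : ℂ) ^ z‖ ≤ 1 := by
          intro t
          have ht1 : (1 : ℝ) ≤ (t : ℝ) := t.2
          rw [Complex.norm_cpow_eq_rpow_re_of_pos (by linarith)]
          exact Real.rpow_le_one_of_one_le_of_nonpos ht1 hz.le
        calc dist (((x : ℝ) : ℂ) ^ z) (((y : ℝ) : ℂ) ^ z)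
            ≤ ‖((x : ℝ) : ℂ) ^ z‖ + ‖((y : ℝ) : ℂ) ^ z‖ := by
              rw [dist_eq_norm]; exact norm_sub_le _ _
          _ ≤ 2 := by have := hb x; have := hb y; linarith }
  else 0

/-- The function `x ↦ x^z log x` as a bounded continuous function on `[1,∞)`. -/
noncomputable def psi (z : ℂ) : BoundedContinuousFunction (Set.Ici (1 : ℝ)) ℂ :=
  if hz : z.re < 0 then
    { toFun := fun x => ((x : ℝ) : ℂ) ^ z * Complex.log ((x : ℝ) : ℂ)
      continuous_toFun := by
        rw [continuous_iff_continuousAt]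
        intro x
        have hx1 : (1 : ℝ) ≤ (x : ℝ) := x.2
        have h1 : ContinuousAt (fun t : ℝ => (t : ℂ) ^ z) (x : ℝ) :=
          Complex.continuousAt_ofReal_cpow_const _ _ (Or.inr (by positivity))
        have h2 : ContinuousAt (fun t : ℝ => Complex.log (t : ℂ)) (x : ℝ) := by
          refine (_root_.continuousAt_clog ?_).comp Complex.continuous_ofReal.continuousAt
          exact Or.inl (by simpa using by linarith : (0 : ℝ) < ((x : ℝ) : ℂ).re)
        exact ((h1.mul h2)).comp continuous_subtype_val.continuousAt
      map_bounded' := by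
        set a : ℝ := -z.re with ha
        have ha0 : 0 < a := by simp [ha]; linarith
        refine ⟨2 * (2 / a), fun x y => ?_⟩
        have hb : ∀ t : Set.Ici (1 : ℝ),
            ‖((t : ℝ) : ℂ) ^ z * Complex.log ((t : ℝ) : ℂ)‖ ≤ 2 / a := by
          intro t
          have ht1 : (1 : ℝ) ≤ (t : ℝ) := t.2
          have ht0 : (0 : ℝ) < (t : ℝ) := by linarith
          rw [norm_mul, Complex.norm_cpow_eq_rpow_re_of_pos ht0,
            ← Complex.ofReal_log ht0.le]
          rw [Complex.norm_real, Real.norm_eq_abs, _root_.abs_of_nonneg (Real.log_nonneg ht1)]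
          have hlog : Real.log (t : ℝ) ≤ (t : ℝ) ^ (a / 2) / (a / 2) :=
            Real.log_le_rpow_div ht0.le (by linarith)
          calc (t : ℝ) ^ z.re * Real.log (t : ℝ)
              ≤ (t : ℝ) ^ z.re * ((t : ℝ) ^ (a / 2) / (a / 2)) := by
                apply mul_le_mul_of_nonneg_left hlog (Real.rpow_nonneg ht0.le _)
            _ = (t : ℝ) ^ (z.re + a / 2) * (2 / a) := by
                rw [Real.rpow_add ht0]; ring
            _ ≤ 1 * (2 / a) := by
                apply mul_le_mul_of_nonneg_right _ (by positivity)
                exact Real.rpow_le_one_of_one_le_of_nonpos ht1 (by simp [ha]; linarith)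
            _ = 2 / a := one_mul _
        calc dist _ _ ≤ ‖_‖ + ‖_‖ := by rw [dist_eq_norm]; exact norm_sub_le _ _
          _ ≤ 2 * (2 / a) := by have := hb x; have := hb y; linarith }
  else 0

lemma phi_apply {z : ℂ} (hz : z.re < 0) (x : Set.Ici (1 : ℝ)) :
    phi z x = ((x : ℝ) : ℂ) ^ z := by
  simp only [phi, dif_pos hz]; rfl

lemma psi_apply {z : ℂ} (hz : z.re < 0) (x : Set.Ici (1 : ℝ)) :
    psi z x = ((x : ℝ) : ℂ) ^ z * Complex.log ((x : ℝ) : ℂ) := by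
  simp only [psi, dif_pos hz]; rfl


/-- The key uniform estimate. -/
lemma key_est {z h : ℂ} (hz : z.re < 0) (hh : ‖h‖ ≤ -z.re / 2) {x : ℝ} (hx : 1 ≤ x) :
    ‖(x : ℂ) ^ (z + h) - (x : ℂ) ^ z - h * ((x : ℂ) ^ z * Complex.log (x : ℂ))‖
      ≤ 64 / z.re ^ 2 * ‖h‖ ^ 2 := by
  set a : ℝ := -z.re with ha
  have ha0 : 0 < a := by simp [ha]; linarith
  have hx0 : (0 : ℝ) < x := by linarith
  have hxc : (x : ℂ) ≠ 0 := by exact_mod_cast hx0.ne'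
  set L : ℝ := Real.log x with hL
  have hL0 : 0 ≤ L := Real.log_nonneg hx
  have hlog : Complex.log (x : ℂ) = (L : ℂ) := (Complex.ofReal_log hx0.le).symm
  have hcz : ∀ w : ℂ, (x : ℂ) ^ w = Complex.exp (w * L) := by
    intro w
    rw [Complex.cpow_def_of_ne_zero hxc, hlog, mul_comm]
  have key : (x : ℂ) ^ (z + h) - (x : ℂ) ^ z - h * ((x : ℂ) ^ z * Complex.log (x : ℂ))
      = Complex.exp (z * L) * (Complex.exp (h * L) - 1 - h * L) := by
    rw [hcz (z + h), hcz z, hlog, add_mul, Complex.exp_add]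
    ring
  rw [key, norm_mul]
  have h1 : ‖Complex.exp (z * (L : ℂ))‖ = Real.exp (z.re * L) := by
    rw [Complex.norm_exp]
    congr 1
    simp [Complex.mul_re]
  have h3 : ‖h * (L : ℂ)‖ = ‖h‖ * L := by
    rw [norm_mul]
    congr 1
    simpa using _root_.abs_of_nonneg hL0
  have h2 : ‖Complex.exp (h * (L : ℂ)) - 1 - h * (L : ℂ)‖
      ≤ (‖h‖ * L) ^ 2 * Real.exp (‖h‖ * L) := by
    have := norm_exp_sub_one_sub_le (h * (L : ℂ))
    rwa [h3] at this
  calc ‖Complex.exp (z * (L : ℂ))‖ * ‖Complex.exp (h * (L : ℂ)) - 1 - h * (L : ℂ)‖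
      ≤ Real.exp (z.re * L) * ((‖h‖ * L) ^ 2 * Real.exp (‖h‖ * L)) := by
        rw [h1]
        exact mul_le_mul_of_nonneg_left h2 (Real.exp_nonneg _)
    _ = ‖h‖ ^ 2 * (L ^ 2 * Real.exp ((z.re + ‖h‖) * L)) := by
        rw [add_mul, Real.exp_add]; ring
    _ ≤ ‖h‖ ^ 2 * (L ^ 2 * Real.exp (-(a / 2) * L)) := by
        apply mul_le_mul_of_nonneg_left _ (by positivity)
        apply mul_le_mul_of_nonneg_left _ (by positivity)
        apply Real.exp_le_exp.2
        apply mul_le_mul_of_nonneg_right _ hL0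
        simp only [ha] at hh ⊢
        linarith
    _ ≤ ‖h‖ ^ 2 * (64 / a ^ 2) := by
        apply mul_le_mul_of_nonneg_left _ (by positivity)
        -- L² e^{-aL/2} ≤ 64/a²
        have hexp : L ≤ 8 / a * Real.exp (a / 8 * L) := by
          have := Real.add_one_le_exp (a / 8 * L)
          have h8 : 0 < 8 / a := by positivity
          have h2' := mul_le_mul_of_nonneg_left this h8.le
          have heq : 8 / a * (a / 8 * L + 1) = L + 8 / a := by field_simp
          rw [heq] at h2'
          linarith
        have hsq : L ^ 2 ≤ 64 / a ^ 2 * Real.exp (a / 4 * L) := by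
          have := mul_le_mul hexp hexp hL0 (by positivity)
          calc L ^ 2 = L * L := sq L
            _ ≤ 8 / a * Real.exp (a / 8 * L) * (8 / a * Real.exp (a / 8 * L)) := this
            _ = 64 / a ^ 2 * Real.exp (a / 4 * L) := by
                rw [show 8 / a * Real.exp (a / 8 * L) * (8 / a * Real.exp (a / 8 * L))
                    = 8 / a * (8 / a) * (Real.exp (a / 8 * L) * Real.exp (a / 8 * L)) from by ring,
                  ← Real.exp_add, show a / 8 * L + a / 8 * L = a / 4 * L from by ring]
                ring
        calc L ^ 2 * Real.exp (-(a / 2) * L)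
            ≤ 64 / a ^ 2 * Real.exp (a / 4 * L) * Real.exp (-(a / 2) * L) := by
              exact mul_le_mul_of_nonneg_right hsq (Real.exp_nonneg _)
          _ = 64 / a ^ 2 * Real.exp (-(a / 4) * L) := by
              rw [mul_assoc, ← Real.exp_add,
                show a / 4 * L + -(a / 2) * L = -(a / 4) * L from by ring]
          _ ≤ 64 / a ^ 2 * 1 := by
              apply mul_le_mul_of_nonneg_left _ (by positivity)
              rw [Real.exp_le_one_iff]
              nlinarith
          _ = 64 / a ^ 2 := mul_one _
    _ = 64 / z.re ^ 2 * ‖h‖ ^ 2 := by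
        rw [ha]; ring_nf


lemma hasDerivAt_phi {z : ℂ} (hz : z.re < 0) : HasDerivAt phi (psi z) z := by
  rw [hasDerivAt_iff_isLittleO, isLittleO_iff]
  intro ε hε
  set a : ℝ := -z.re with ha
  have ha0 : 0 < a := by simp [ha]; linarith
  set C : ℝ := 64 / z.re ^ 2 with hC
  have hzre : z.re ≠ 0 := ne_of_lt hz
  have hC0 : 0 < C := by positivity
  filter_upwards [Metric.ball_mem_nhds z (lt_min (half_pos ha0) (div_pos hε hC0))] with w hw
  rw [Metric.mem_ball, dist_eq_norm] at hw
  have hha : ‖w - z‖ ≤ a / 2 := le_of_lt (lt_of_lt_of_le hw (min_le_left _ _))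
  have hhe : ‖w - z‖ * C ≤ ε := by
    have hlt : ‖w - z‖ < ε / C := lt_of_lt_of_le hw (min_le_right _ _)
    calc ‖w - z‖ * C ≤ ε / C * C := mul_le_mul_of_nonneg_right hlt.le hC0.le
      _ = ε := div_mul_cancel₀ _ hC0.ne'
  have hw_re : w.re < 0 := by
    have h1 : |(w - z).re| ≤ ‖w - z‖ := Complex.abs_re_le_norm (w - z)
    have h2 := (abs_le.1 h1).2
    have h3 : (w - z).re = w.re - z.re := by simp
    simp only [ha] at hha
    rw [h3] at h2
    linarith
  apply (BoundedContinuousFunction.norm_le (by positivity)).2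
  intro x
  have hx1 : (1 : ℝ) ≤ (x : ℝ) := x.2
  simp only [BoundedContinuousFunction.coe_sub, BoundedContinuousFunction.coe_smul,
    Pi.sub_apply, Pi.smul_apply, smul_eq_mul]
  rw [phi_apply hw_re, phi_apply hz, psi_apply hz]
  have hk := key_est hz hha hx1
  rw [show z + (w - z) = w from by ring] at hk
  calc ‖((x : ℝ) : ℂ) ^ w - ((x : ℝ) : ℂ) ^ z
        - (w - z) * (((x : ℝ) : ℂ) ^ z * Complex.log ((x : ℝ) : ℂ))‖
      ≤ 64 / z.re ^ 2 * ‖w - z‖ ^ 2 := hk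
    _ = ‖w - z‖ * C * ‖w - z‖ := by rw [hC]; ring
    _ ≤ ε * ‖w - z‖ := mul_le_mul_of_nonneg_right hhe (norm_nonneg _)

end St6

/-- For each `k ∈ ℕ`, the map `F_k(z)(x) = x^k (d/dx)^k (x^z)` is a well-defined map
from `{Re z < 0}` to the Banach space `C_b([1,∞), ℂ)` of bounded continuous functions,
and it is holomorphic there with derivative `F_k'(z)(x) = x^k (d/dx)^k (x^z log x)`. -/
theorem statement6 (k : ℕ) :
    ∃ F G : ℂ → BoundedContinuousFunction (Set.Ici (1 : ℝ)) ℂ,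
      (∀ z : ℂ, z.re < 0 → ∀ x : Set.Ici (1 : ℝ),
        F z x = ((x : ℝ) : ℂ) ^ k *
          iteratedDeriv k (fun y : ℝ => ((y : ℂ) ^ z)) (x : ℝ)) ∧
      (∀ z : ℂ, z.re < 0 → ∀ x : Set.Ici (1 : ℝ),
        G z x = ((x : ℝ) : ℂ) ^ k *
          iteratedDeriv k (fun y : ℝ => ((y : ℂ) ^ z * Complex.log (y : ℂ))) (x : ℝ)) ∧
      (∀ z : ℂ, z.re < 0 → HasDerivAt F (G z) z) := by
  refine ⟨fun z => St6.c k z • St6.phi z,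
    fun z => St6.c' k z • St6.phi z + St6.c k z • St6.psi z, ?_, ?_, ?_⟩
  · intro z hz x
    have hx1 : (1 : ℝ) ≤ (x : ℝ) := x.2
    have hxc : ((x : ℝ) : ℂ) ≠ 0 := by
      simp only [ne_eq, Complex.ofReal_eq_zero]; linarith
    have hpow : ((x : ℝ) : ℂ) ^ (k : ℕ) * ((x : ℝ) : ℂ) ^ (z - (k : ℕ)) = ((x : ℝ) : ℂ) ^ z := by
      rw [← Complex.cpow_natCast, ← Complex.cpow_add _ _ hxc]
      congr 1; ring
    rw [St6.iteratedDeriv_cpow k z (x : ℝ) (by linarith)]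
    simp only [BoundedContinuousFunction.coe_smul, Pi.smul_apply, smul_eq_mul]
    rw [St6.phi_apply hz, ← hpow]
    ring
  · intro z hz x
    have hx1 : (1 : ℝ) ≤ (x : ℝ) := x.2
    have hxc : ((x : ℝ) : ℂ) ≠ 0 := by
      simp only [ne_eq, Complex.ofReal_eq_zero]; linarith
    have hpow : ((x : ℝ) : ℂ) ^ (k : ℕ) * ((x : ℝ) : ℂ) ^ (z - (k : ℕ)) = ((x : ℝ) : ℂ) ^ z := by
      rw [← Complex.cpow_natCast, ← Complex.cpow_add _ _ hxc]
      congr 1; ring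
    rw [St6.iteratedDeriv_cpow_mul_log k z (x : ℝ) (by linarith)]
    simp only [BoundedContinuousFunction.coe_add, BoundedContinuousFunction.coe_smul,
      Pi.add_apply, Pi.smul_apply, smul_eq_mul]
    rw [St6.phi_apply hz, St6.psi_apply hz, ← hpow]
    ring
  · intro z hz
    have h := (St6.hasDerivAt_c k z).smul (St6.hasDerivAt_phi hz)
    exact h.congr_deriv (add_comm _ _)
end

section
/- For every polynomial P ∈ ℂ[X], every ε > 0 and every R > 0, there is a constant C > 0 such that for all z, w ∈ ℂ with Re z ≤ −2ε, |z| ≤ R and |w| ≤ ε, and all real x ≥ 1, one has |P(z+w)·x^{z+w} − P(z)·x^z − w·(P'(z) + P(z)·log x)·x^z| ≤ C·|w|²·x^{−ε}·(1 + log x)². -/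
open Metric in
/-- Second-order mean value inequality on a closed ball. -/
lemma aux_mvt2 {f f1 f2 : ℂ → ℂ} {r K : ℝ} (hK : 0 ≤ K)
    (hd1 : ∀ u ∈ closedBall (0:ℂ) r, HasDerivAt f (f1 u) u)
    (hd2 : ∀ u ∈ closedBall (0:ℂ) r, HasDerivAt f1 (f2 u) u)
    (hb : ∀ u ∈ closedBall (0:ℂ) r, ‖f2 u‖ ≤ K)
    {w : ℂ} (hw : w ∈ closedBall (0:ℂ) r) :
    ‖f w - f 0 - w * f1 0‖ ≤ K * ‖w‖ ^ 2 := by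
  have hwr : ‖w‖ ≤ r := by simpa [mem_closedBall, dist_eq_norm] using hw
  set s : Set ℂ := closedBall 0 ‖w‖ with hs
  have hsub : s ⊆ closedBall (0:ℂ) r := closedBall_subset_closedBall hwr
  have h0s : (0:ℂ) ∈ s := mem_closedBall_self (norm_nonneg w)
  have hws : w ∈ s := by simp [hs, mem_closedBall, dist_eq_norm]
  have step1 : ∀ u ∈ s, ‖f1 u - f1 0‖ ≤ K * ‖w‖ := by
    intro u hu
    have := (convex_closedBall (0:ℂ) ‖w‖).norm_image_sub_le_of_norm_hasFDerivWithin_le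
      (f' := fun u => ContinuousLinearMap.smulRight (1 : ℂ →L[ℂ] ℂ) (f2 u)) (C := K)
      (fun v hv => ((hd2 v (hsub hv)).hasFDerivAt).hasFDerivWithinAt) ?_ h0s hu
    · calc ‖f1 u - f1 0‖ ≤ K * ‖u - 0‖ := this
        _ ≤ K * ‖w‖ := by
          apply mul_le_mul_of_nonneg_left _ hK
          simpa [hs, mem_closedBall, dist_eq_norm] using hu
    · intro v hv
      rw [ContinuousLinearMap.norm_smulRight_apply]
      simpa using hb v (hsub hv)
  have step2 : ‖(f w - w * f1 0) - (f 0 - 0 * f1 0)‖ ≤ K * ‖w‖ * ‖w - 0‖ := by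
    apply (convex_closedBall (0:ℂ) ‖w‖).norm_image_sub_le_of_norm_hasFDerivWithin_le
      (f' := fun u => ContinuousLinearMap.smulRight (1 : ℂ →L[ℂ] ℂ) (f1 u - f1 0))
      ?_ ?_ h0s hws
    · intro v hv
      have h := (((hd1 v (hsub hv)).sub ((hasDerivAt_id' v).mul_const (f1 0))).hasFDerivAt).hasFDerivWithinAt (s := s)
      simp only [one_mul] at h
      exact h
    · intro v hv
      rw [ContinuousLinearMap.norm_smulRight_apply]
      simpa using step1 v hv
  calc ‖f w - f 0 - w * f1 0‖ = ‖(f w - w * f1 0) - (f 0 - 0 * f1 0)‖ := by ring_nf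
    _ ≤ K * ‖w‖ * ‖w - 0‖ := step2
    _ = K * ‖w‖ ^ 2 := by rw [sub_zero]; ring

lemma aux_deriv (Q : Polynomial ℂ) (z L u : ℂ) :
    HasDerivAt (fun w => Q.eval (z + w) * Complex.exp ((z + w) * L))
      ((Q.derivative.eval (z + u) + Q.eval (z + u) * L) * Complex.exp ((z + u) * L)) u := by
  have h1 : HasDerivAt (fun w : ℂ => z + w) 1 u := by
    simpa using (hasDerivAt_id u).const_add z
  have h2 : HasDerivAt (fun w => Q.eval (z + w)) (Q.derivative.eval (z + u)) u := by
    simpa [Function.comp_def] using (Q.hasDerivAt (z + u)).comp u h1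
  have h3 : HasDerivAt (fun w => Complex.exp ((z + w) * L)) (L * Complex.exp ((z + u) * L)) u := by
    have hin : HasDerivAt (fun w : ℂ => (z + w) * L) L u := by simpa using h1.mul_const L
    simpa [mul_comm, Function.comp_def] using (Complex.hasDerivAt_exp ((z + u) * L)).comp u hin
  have := h2.mul h3
  exact this.congr_deriv (by ring)


/-- Second-order Taylor estimate in `w` for `P(z+w)·x^{z+w}`: for every polynomial `P`,
`ε > 0` and `R > 0` there is `C > 0` such that for `Re z ≤ -2ε`, `|z| ≤ R`, `|w| ≤ ε`
and real `x ≥ 1`,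
`|P(z+w) x^{z+w} − P(z) x^z − w (P'(z) + P(z) log x) x^z| ≤ C |w|² x^{-ε} (1 + log x)²`. -/
theorem statement7 (P : Polynomial ℂ) (ε R : ℝ) (hε : 0 < ε) (hR : 0 < R) :
    ∃ C : ℝ, 0 < C ∧ ∀ (z w : ℂ) (x : ℝ), z.re ≤ -2 * ε → ‖z‖ ≤ R → ‖w‖ ≤ ε → 1 ≤ x →
      ‖P.eval (z + w) * (x : ℂ) ^ (z + w) - P.eval z * (x : ℂ) ^ z -
          w * ((P.derivative.eval z) + P.eval z * Complex.log (x : ℂ)) * (x : ℂ) ^ z‖ ≤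
        C * ‖w‖ ^ 2 * x ^ (-ε) * (1 + Real.log x) ^ 2 := by
  obtain ⟨B0, hB0⟩ := (isCompact_closedBall (0:ℂ) (R+ε)).exists_bound_of_continuousOn
    (Polynomial.continuous P).continuousOn
  obtain ⟨B1, hB1⟩ := (isCompact_closedBall (0:ℂ) (R+ε)).exists_bound_of_continuousOn
    (Polynomial.continuous P.derivative).continuousOn
  obtain ⟨B2, hB2⟩ := (isCompact_closedBall (0:ℂ) (R+ε)).exists_bound_of_continuousOn
    (Polynomial.continuous P.derivative.derivative).continuousOn
  set A0 := max B0 0 with hA0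
  set A1 := max B1 0 with hA1
  set A2 := max B2 0 with hA2
  have hA0n : 0 ≤ A0 := le_max_right _ _
  have hA1n : 0 ≤ A1 := le_max_right _ _
  have hA2n : 0 ≤ A2 := le_max_right _ _
  refine ⟨A2 + 2*A1 + A0 + 1, by positivity, ?_⟩
  intro z w x hz hzR hw hx
  have hx0 : (0:ℝ) < x := lt_of_lt_of_le one_pos hx
  set l := Real.log x with hldef
  have hl : 0 ≤ l := Real.log_nonneg hx
  set L : ℂ := (l : ℂ) with hLdef
  have hLog : Complex.log (x:ℂ) = L := (Complex.ofReal_log hx0.le).symm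
  have hcpow : ∀ s : ℂ, (x:ℂ) ^ s = Complex.exp (s * L) := by
    intro s
    rw [Complex.cpow_def_of_ne_zero (by exact_mod_cast hx0.ne'), hLog, mul_comm]
  set Q : Polynomial ℂ := P.derivative + P * Polynomial.C L with hQ
  have hQeval : ∀ s : ℂ, Q.eval s = P.derivative.eval s + P.eval s * L := by
    intro s; simp [hQ]
  have hQ'eval : ∀ s : ℂ, Q.derivative.eval s
      = P.derivative.derivative.eval s + P.derivative.eval s * L := by
    intro s; simp [hQ]
  set f : ℂ → ℂ := fun u => P.eval (z + u) * Complex.exp ((z + u) * L) with hf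
  set f1 : ℂ → ℂ := fun u => Q.eval (z + u) * Complex.exp ((z + u) * L) with hf1
  set f2 : ℂ → ℂ := fun u =>
    (Q.derivative.eval (z + u) + Q.eval (z + u) * L) * Complex.exp ((z + u) * L) with hf2
  have hd1 : ∀ u ∈ Metric.closedBall (0:ℂ) ε, HasDerivAt f (f1 u) u := by
    intro u _
    have h := aux_deriv P z L u
    have : f1 u = (P.derivative.eval (z + u) + P.eval (z + u) * L) * Complex.exp ((z + u) * L) := by
      simp only [hf1, hQeval]
    rw [this]; exact h
  have hd2 : ∀ u ∈ Metric.closedBall (0:ℂ) ε, HasDerivAt f1 (f2 u) u := by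
    intro u _; exact aux_deriv Q z L u
  set K : ℝ := (A2 + 2*A1 + A0 + 1) * (x ^ (-ε) * (1 + l) ^ 2) with hK
  have hKn : 0 ≤ K := by positivity
  have hb : ∀ u ∈ Metric.closedBall (0:ℂ) ε, ‖f2 u‖ ≤ K := by
    intro u hu
    have hun : ‖u‖ ≤ ε := by simpa [Metric.mem_closedBall, dist_eq_norm] using hu
    have hmem : z + u ∈ Metric.closedBall (0:ℂ) (R + ε) := by
      simp only [Metric.mem_closedBall, dist_eq_norm, sub_zero]
      calc ‖z + u‖ ≤ ‖z‖ + ‖u‖ := norm_add_le _ _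
        _ ≤ R + ε := add_le_add hzR hun
    have e0 : ‖P.eval (z + u)‖ ≤ A0 := (hB0 _ hmem).trans (le_max_left _ _)
    have e1 : ‖P.derivative.eval (z + u)‖ ≤ A1 := (hB1 _ hmem).trans (le_max_left _ _)
    have e2 : ‖P.derivative.derivative.eval (z + u)‖ ≤ A2 := (hB2 _ hmem).trans (le_max_left _ _)
    have hLnorm : ‖L‖ = l := by simp [hLdef, abs_of_nonneg hl]
    have hfac : ‖Q.derivative.eval (z + u) + Q.eval (z + u) * L‖
        ≤ A2 + 2 * A1 * l + A0 * l ^ 2 := by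
      rw [hQ'eval, hQeval]
      calc ‖P.derivative.derivative.eval (z+u) + P.derivative.eval (z+u) * L
              + (P.derivative.eval (z+u) + P.eval (z+u) * L) * L‖
          ≤ ‖P.derivative.derivative.eval (z+u)‖ + ‖P.derivative.eval (z+u) * L‖
              + ‖(P.derivative.eval (z+u) + P.eval (z+u) * L) * L‖ :=
            (norm_add_le _ _).trans (by gcongr; exact norm_add_le _ _)
        _ ≤ A2 + A1 * l + (A1 + A0 * l) * l := by
            rw [norm_mul, norm_mul, hLnorm]
            gcongr
            exact (norm_add_le _ _).trans (by rw [norm_mul, hLnorm]; gcongr)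
        _ = A2 + 2 * A1 * l + A0 * l ^ 2 := by ring
    have hexp : ‖Complex.exp ((z + u) * L)‖ ≤ x ^ (-ε) := by
      have hre : ((z + u) * L).re = (z + u).re * l := by
        simp [hLdef, Complex.mul_re]
      rw [Complex.norm_exp, hre]
      have : Real.exp ((z + u).re * l) = x ^ ((z + u).re) := by
        rw [Real.rpow_def_of_pos hx0, mul_comm]
      rw [this]
      apply Real.rpow_le_rpow_of_exponent_le hx
      have hure : u.re ≤ ε := (Complex.re_le_norm u).trans hun
      have : (z + u).re = z.re + u.re := by simp
      rw [this]; linarith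
    calc ‖f2 u‖ = ‖Q.derivative.eval (z + u) + Q.eval (z + u) * L‖
          * ‖Complex.exp ((z + u) * L)‖ := by rw [hf2]; exact norm_mul _ _
      _ ≤ (A2 + 2 * A1 * l + A0 * l ^ 2) * x ^ (-ε) := by
          apply mul_le_mul hfac hexp (norm_nonneg _) (by positivity)
      _ ≤ K := by
          rw [hK]
          have hxe : (0:ℝ) ≤ x ^ (-ε) := le_of_lt (Real.rpow_pos_of_pos hx0 _)
          have hpoly : A2 + 2*A1*l + A0*l^2 ≤ (A2 + 2*A1 + A0 + 1) * (1 + l)^2 := by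
            nlinarith [mul_nonneg hl hl, mul_nonneg hA1n hl, mul_nonneg hA0n hl,
              mul_nonneg hA2n hl, mul_nonneg (mul_nonneg hA0n hl) hl,
              mul_nonneg (mul_nonneg hA1n hl) hl, mul_nonneg (mul_nonneg hA2n hl) hl]
          calc (A2 + 2*A1*l + A0*l^2) * x ^ (-ε)
              ≤ ((A2 + 2*A1 + A0 + 1) * (1 + l)^2) * x ^ (-ε) :=
                mul_le_mul_of_nonneg_right hpoly hxe
            _ = (A2 + 2*A1 + A0 + 1) * (x ^ (-ε) * (1 + l) ^ 2) := by ring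
  have hwmem : w ∈ Metric.closedBall (0:ℂ) ε := by
    simpa [Metric.mem_closedBall, dist_eq_norm] using hw
  have key := aux_mvt2 hKn hd1 hd2 hb hwmem
  have heq : P.eval (z + w) * (x : ℂ) ^ (z + w) - P.eval z * (x : ℂ) ^ z -
      w * ((P.derivative.eval z) + P.eval z * Complex.log (x : ℂ)) * (x : ℂ) ^ z
      = f w - f 0 - w * f1 0 := by
    rw [hf, hf1]
    simp only [add_zero, hQeval, hcpow, hLog]
    ring
  rw [heq]
  calc ‖f w - f 0 - w * f1 0‖ ≤ K * ‖w‖ ^ 2 := key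
    _ = (A2 + 2*A1 + A0 + 1) * ‖w‖ ^ 2 * x ^ (-ε) * (1 + l) ^ 2 := by rw [hK]; ring
end

section
/- Let B be a unital complex Banach algebra and let J ⊆ B be a semi-ideal, i.e. a linear subspace such that x·b·y ∈ J for all x, y ∈ J and all b ∈ B. Let x ∈ J and let (a_n)_{n≥1} be a sequence of complex numbers such that the series Σ_{n≥1} |a_n|·‖x‖^n converges. Then the element Σ_{n≥1} a_n·x^n (the sum of the norm-convergent series in B) belongs to J. In other words, a semi-ideal is closed under the functional calculus f ↦ f(x) for functions f given by a power series converging on a disc of radius greater than ‖x‖ with f(0) = 0. -/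
/-- A semi-ideal `J` of a unital complex Banach algebra `B` (a linear subspace with
`x·b·y ∈ J` for `x, y ∈ J`, `b ∈ B`) is closed under the functional calculus by power
series vanishing at `0`: if `x ∈ J` and `Σ_{n≥1} |a_n| ‖x‖^n < ∞`, then
`Σ_{n≥1} a_n x^n ∈ J`. -/
theorem statement8 {B : Type*} [NormedRing B] [NormedAlgebra ℂ B] [CompleteSpace B]
    (J : Submodule ℂ B)
    (hJ : ∀ x ∈ J, ∀ y ∈ J, ∀ b : B, x * b * y ∈ J)
    (x : B) (hx : x ∈ J) (a : ℕ → ℂ)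
    (hsum : Summable fun n : ℕ => ‖a (n + 1)‖ * ‖x‖ ^ (n + 1)) :
    (∑' n : ℕ, a (n + 1) • x ^ (n + 1)) ∈ J := by
  by_cases hx0 : x = 0
  · simp only [hx0, zero_pow (Nat.succ_ne_zero _), smul_zero, tsum_zero]
    exact J.zero_mem
  have hxn : (0 : ℝ) < ‖x‖ := norm_pos_iff.mpr hx0
  have hbound : ∀ n : ℕ, ‖a (n + 1) • x ^ (n + 1)‖ ≤ ‖a (n + 1)‖ * ‖x‖ ^ (n + 1) := by
    intro n
    rw [norm_smul]
    exact mul_le_mul_of_nonneg_left (norm_pow_le' x n.succ_pos) (norm_nonneg _)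
  have hg : Summable fun n : ℕ => a (n + 1) • x ^ (n + 1) :=
    Summable.of_norm_bounded hsum hbound
  -- summability of the middle factor
  have hy : Summable fun n : ℕ => a (n + 2) • x ^ n := by
    rw [← summable_nat_add_iff 1]
    apply Summable.of_norm_bounded
      (g := fun n : ℕ => ‖a (n + 2 + 1)‖ * ‖x‖ ^ (n + 2 + 1) / ‖x‖ ^ 2)
      (((summable_nat_add_iff 2).mpr hsum).div_const _)
    intro n
    have h2 : ‖a (n + 2 + 1)‖ * ‖x‖ ^ (n + 2 + 1) / ‖x‖ ^ 2
        = ‖a (n + 1 + 2)‖ * ‖x‖ ^ (n + 1) := by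
      rw [show n + 2 + 1 = n + 1 + 2 from by omega, pow_add]
      field_simp
    rw [h2, norm_smul]
    exact mul_le_mul_of_nonneg_left (norm_pow_le' x n.succ_pos) (norm_nonneg _)
  set y : B := ∑' n : ℕ, a (n + 2) • x ^ n with hy_def
  have key : (∑' n : ℕ, a (n + 1) • x ^ (n + 1)) = a 1 • x + x * y * x := by
    rw [Summable.tsum_eq_zero_add hg]
    congr 1
    · simp
    · rw [hy_def, ← hy.tsum_mul_left x, ← (hy.mul_left x).tsum_mul_right x]
      exact tsum_congr fun n => by
        rw [mul_smul_comm, smul_mul_assoc, ← pow_succ', ← pow_succ]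
  rw [key]
  exact J.add_mem (J.smul_mem _ hx) (hJ x hx x hx y)
end

section
/- For every k ∈ ℕ, the set J_k is a subalgebra of 𝔄: it is a linear subspace, and if A, B ∈ J_k then A·B ∈ J_k with p_k(A·B) ≤ p_k(A)·p_k(B); moreover p_k is a norm on J_k satisfying p_k(A) ≥ ‖A‖ for all A ∈ J_k. (In particular, for A, B ∈ J_1 one has ω^ℓ(AB) = ω^ℓ(A)·B, ω^r(AB) = A·ω^r(B) and ω^{ℓ,r}(AB) = ω^ℓ(A)·ω^r(B).) -/
open ContinuousLinearMap
open scoped Classical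

variable {H : Type*} [NormedAddCommGroup H] [InnerProductSpace ℂ H] [CompleteSpace H]

set_option linter.unusedSectionVars false

lemma graph_fn (T : H →ₗ.[ℂ] H) {x y y' : H} (h : (x, y) ∈ T.graph)
    (h' : (x, y') ∈ T.graph) : y = y' := by
  rw [LinearPMap.mem_graph_iff] at h h'
  obtain ⟨u, hu1, hu2⟩ := h
  obtain ⟨v, hv1, hv2⟩ := h'
  simp only at hu1 hu2 hv1 hv2
  have : u = v := Subtype.ext (by rw [hu1, hv1])
  rw [← hu2, ← hv2, this]

lemma clm_ext_dense {s : Set H} (hs : Dense s) {f g : H →L[ℂ] H}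
    (h : ∀ x ∈ s, f x = g x) : f = g :=
  DFunLike.coe_injective (f.continuous.ext_on hs g.continuous h)


/-- `ω^ℓ(A) := T ∘ A`, as a bounded operator, when `A(H) ⊆ D(T)` and `T ∘ A` is
bounded; junk value `0` otherwise. -/
noncomputable def omegaL (T : H →ₗ.[ℂ] H) (A : H →L[ℂ] H) : H →L[ℂ] H :=
  if h : ∃ L : H →L[ℂ] H, ∀ f : H, (A f, L f) ∈ T.graph then h.choose else 0

/-- `ω^r(A)`: the bounded extension of `f ↦ A (T f)`, when it exists;
junk value `0` otherwise. -/
noncomputable def omegaR (T : H →ₗ.[ℂ] H) (A : H →L[ℂ] H) : H →L[ℂ] H :=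
  if h : ∃ R : H →L[ℂ] H, ∀ f : T.domain, R ↑f = A (T f) then h.choose else 0

/-- `ω^{ℓ,r}(A)`: the bounded extension of `f ↦ T (A (T f))`, when it exists;
junk value `0` otherwise. -/
noncomputable def omegaLR (T : H →ₗ.[ℂ] H) (A : H →L[ℂ] H) : H →L[ℂ] H :=
  if h : ∃ S : H →L[ℂ] H, ∀ f : T.domain, (A (T f), S ↑f) ∈ T.graph then h.choose else 0

lemma omegaL_spec {T : H →ₗ.[ℂ] H} {A : H →L[ℂ] H}
    (h : ∃ L : H →L[ℂ] H, ∀ f : H, (A f, L f) ∈ T.graph) :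
    ∀ f : H, (A f, omegaL T A f) ∈ T.graph := by
  rw [omegaL, dif_pos h]; exact h.choose_spec

lemma omegaL_unique {T : H →ₗ.[ℂ] H} {A L : H →L[ℂ] H}
    (hL : ∀ f : H, (A f, L f) ∈ T.graph) : omegaL T A = L :=
  ContinuousLinearMap.ext fun f => graph_fn T (omegaL_spec ⟨L, hL⟩ f) (hL f)

lemma omegaR_spec {T : H →ₗ.[ℂ] H} {A : H →L[ℂ] H}
    (h : ∃ R : H →L[ℂ] H, ∀ f : T.domain, R ↑f = A (T f)) :
    ∀ f : T.domain, omegaR T A ↑f = A (T f) := by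
  rw [omegaR, dif_pos h]; exact h.choose_spec

lemma omegaR_unique {T : H →ₗ.[ℂ] H} (hdense : Dense (T.domain : Set H))
    {A R : H →L[ℂ] H} (hR : ∀ f : T.domain, R ↑f = A (T f)) : omegaR T A = R := by
  refine clm_ext_dense hdense fun x hx => ?_
  rw [omegaR_spec ⟨R, hR⟩ ⟨x, hx⟩, hR ⟨x, hx⟩]

lemma omegaLR_spec {T : H →ₗ.[ℂ] H} {A : H →L[ℂ] H}
    (h : ∃ S : H →L[ℂ] H, ∀ f : T.domain, (A (T f), S ↑f) ∈ T.graph) :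
    ∀ f : T.domain, (A (T f), omegaLR T A ↑f) ∈ T.graph := by
  rw [omegaLR, dif_pos h]; exact h.choose_spec

lemma omegaLR_unique {T : H →ₗ.[ℂ] H} (hdense : Dense (T.domain : Set H))
    {A S : H →L[ℂ] H} (hS : ∀ f : T.domain, (A (T f), S ↑f) ∈ T.graph) :
    omegaLR T A = S := by
  refine clm_ext_dense hdense fun x hx => ?_
  exact graph_fn T (omegaLR_spec ⟨S, hS⟩ ⟨x, hx⟩) (hS ⟨x, hx⟩)

/-- existence triple for `A`. -/
def HasOm (T : H →ₗ.[ℂ] H) (A : H →L[ℂ] H) : Prop :=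
  (∃ L : H →L[ℂ] H, ∀ f : H, (A f, L f) ∈ T.graph) ∧
  (∃ R : H →L[ℂ] H, ∀ f : T.domain, R ↑f = A (T f)) ∧
  (∃ S : H →L[ℂ] H, ∀ f : T.domain, (A (T f), S ↑f) ∈ T.graph)

section Ids
variable {T : H →ₗ.[ℂ] H} {A B : H →L[ℂ] H} {c : ℂ}

lemma mulL_mem (hA : HasOm T A) :
    ∀ f : H, ((A * B) f, (omegaL T A * B) f) ∈ T.graph := fun f =>
  omegaL_spec hA.1 (B f)

lemma mulR_mem (hB : HasOm T B) :
    ∀ f : T.domain, (A * omegaR T B) ↑f = (A * B) (T f) := fun f => by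
  simp only [mul_apply_eq_comp, omegaR_spec hB.2.1 f]

lemma mulLR_mem (hA : HasOm T A) (hB : HasOm T B) :
    ∀ f : T.domain, ((A * B) (T f), (omegaL T A * omegaR T B) ↑f) ∈ T.graph := fun f => by
  have := omegaL_spec hA.1 (omegaR T B ↑f)
  rw [omegaR_spec hB.2.1 f] at this
  simpa only [mul_apply_eq_comp, omegaR_spec hB.2.1 f] using this

lemma hasOm_mul (hA : HasOm T A) (hB : HasOm T B) : HasOm T (A * B) :=
  ⟨⟨_, mulL_mem hA⟩, ⟨_, mulR_mem hB⟩, ⟨_, mulLR_mem hA hB⟩⟩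

lemma omegaL_mul (hA : HasOm T A) :
    omegaL T (A * B) = omegaL T A * B := omegaL_unique (mulL_mem hA)

lemma omegaR_mul (hdense : Dense (T.domain : Set H)) (hB : HasOm T B) :
    omegaR T (A * B) = A * omegaR T B := omegaR_unique hdense (mulR_mem hB)

lemma omegaLR_mul (hdense : Dense (T.domain : Set H)) (hA : HasOm T A) (hB : HasOm T B) :
    omegaLR T (A * B) = omegaL T A * omegaR T B := omegaLR_unique hdense (mulLR_mem hA hB)

lemma addL_mem (hA : HasOm T A) (hB : HasOm T B) :
    ∀ f : H, ((A + B) f, (omegaL T A + omegaL T B) f) ∈ T.graph := fun f => by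
  have := T.graph.add_mem (omegaL_spec hA.1 f) (omegaL_spec hB.1 f)
  simpa [Prod.mk_add_mk] using this

lemma addR_mem (hA : HasOm T A) (hB : HasOm T B) :
    ∀ f : T.domain, (omegaR T A + omegaR T B) ↑f = (A + B) (T f) := fun f => by
  simp [omegaR_spec hA.2.1 f, omegaR_spec hB.2.1 f]

lemma addLR_mem (hA : HasOm T A) (hB : HasOm T B) :
    ∀ f : T.domain, ((A + B) (T f), (omegaLR T A + omegaLR T B) ↑f) ∈ T.graph := fun f => by
  have := T.graph.add_mem (omegaLR_spec hA.2.2 f) (omegaLR_spec hB.2.2 f)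
  simpa [Prod.mk_add_mk] using this

lemma hasOm_add (hA : HasOm T A) (hB : HasOm T B) : HasOm T (A + B) :=
  ⟨⟨_, addL_mem hA hB⟩, ⟨_, addR_mem hA hB⟩, ⟨_, addLR_mem hA hB⟩⟩

lemma omegaL_add (hA : HasOm T A) (hB : HasOm T B) :
    omegaL T (A + B) = omegaL T A + omegaL T B := omegaL_unique (addL_mem hA hB)

lemma omegaR_add (hdense : Dense (T.domain : Set H)) (hA : HasOm T A) (hB : HasOm T B) :
    omegaR T (A + B) = omegaR T A + omegaR T B := omegaR_unique hdense (addR_mem hA hB)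

lemma omegaLR_add (hdense : Dense (T.domain : Set H)) (hA : HasOm T A) (hB : HasOm T B) :
    omegaLR T (A + B) = omegaLR T A + omegaLR T B := omegaLR_unique hdense (addLR_mem hA hB)

lemma smulL_mem (hA : HasOm T A) :
    ∀ f : H, ((c • A) f, (c • omegaL T A) f) ∈ T.graph := fun f => by
  have := T.graph.smul_mem c (omegaL_spec hA.1 f)
  simpa [Prod.smul_mk] using this

lemma smulR_mem (hA : HasOm T A) :
    ∀ f : T.domain, (c • omegaR T A) ↑f = (c • A) (T f) := fun f => by
  simp [omegaR_spec hA.2.1 f]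

lemma smulLR_mem (hA : HasOm T A) :
    ∀ f : T.domain, ((c • A) (T f), (c • omegaLR T A) ↑f) ∈ T.graph := fun f => by
  have := T.graph.smul_mem c (omegaLR_spec hA.2.2 f)
  simpa [Prod.smul_mk] using this

lemma hasOm_smul (hA : HasOm T A) : HasOm T (c • A) :=
  ⟨⟨_, smulL_mem hA⟩, ⟨_, smulR_mem hA⟩, ⟨_, smulLR_mem hA⟩⟩

lemma omegaL_smul (hA : HasOm T A) :
    omegaL T (c • A) = c • omegaL T A := omegaL_unique (smulL_mem hA)

lemma omegaR_smul (hdense : Dense (T.domain : Set H)) (hA : HasOm T A) :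
    omegaR T (c • A) = c • omegaR T A := omegaR_unique hdense (smulR_mem hA)

lemma omegaLR_smul (hdense : Dense (T.domain : Set H)) (hA : HasOm T A) :
    omegaLR T (c • A) = c • omegaLR T A := omegaLR_unique hdense (smulLR_mem hA)

end Ids


/-- The scale of semi-ideals `J_k = J_k(T)` inside `𝔄`: `J_0 = 𝔄` and
`A ∈ J_{k+1}` iff `A ∈ J_k`, the operators `ω^ℓ(A), ω^r(A), ω^{ℓ,r}(A)` exist
(as bounded operators) and belong to `J_k`. -/
def Jset (T : H →ₗ.[ℂ] H) (𝔄 : Set (H →L[ℂ] H)) : ℕ → Set (H →L[ℂ] H)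
  | 0 => 𝔄
  | (k + 1) =>
    { A | A ∈ Jset T 𝔄 k ∧
      (∃ L : H →L[ℂ] H, ∀ f : H, (A f, L f) ∈ T.graph) ∧
      (∃ R : H →L[ℂ] H, ∀ f : T.domain, R ↑f = A (T f)) ∧
      (∃ S : H →L[ℂ] H, ∀ f : T.domain, (A (T f), S ↑f) ∈ T.graph) ∧
      omegaL T A ∈ Jset T 𝔄 k ∧ omegaR T A ∈ Jset T 𝔄 k ∧ omegaLR T A ∈ Jset T 𝔄 k }

/-- The norms `p_k`: `p_0(A) = ‖A‖` and
`p_{k+1}(A) = p_k(A) + p_k(ω^ℓ(A)) + p_k(ω^r(A)) + p_k(ω^{ℓ,r}(A))`. -/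
noncomputable def pnorm (T : H →ₗ.[ℂ] H) : ℕ → (H →L[ℂ] H) → ℝ
  | 0, A => ‖A‖
  | (k + 1), A =>
      pnorm T k A + pnorm T k (omegaL T A) + pnorm T k (omegaR T A) +
        pnorm T k (omegaLR T A)

lemma pnorm_nonneg (T : H →ₗ.[ℂ] H) (k : ℕ) (A : H →L[ℂ] H) : 0 ≤ pnorm T k A := by
  induction k generalizing A with
  | zero => exact norm_nonneg A
  | succ k ih => exact add_nonneg (add_nonneg (add_nonneg (ih A) (ih _)) (ih _)) (ih _)

lemma norm_le_pnorm (T : H →ₗ.[ℂ] H) (k : ℕ) (A : H →L[ℂ] H) : ‖A‖ ≤ pnorm T k A := by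
  induction k generalizing A with
  | zero => exact le_refl _
  | succ k ih =>
    calc ‖A‖ ≤ pnorm T k A := ih A
    _ ≤ _ := by
      have h1 := pnorm_nonneg T k (omegaL T A)
      have h2 := pnorm_nonneg T k (omegaR T A)
      have h3 := pnorm_nonneg T k (omegaLR T A)
      show pnorm T k A ≤ pnorm T k A + _ + _ + _
      linarith

lemma hasOm_of_mem {T : H →ₗ.[ℂ] H} {𝔄 : Set (H →L[ℂ] H)} {k : ℕ} {A : H →L[ℂ] H}
    (hA : A ∈ Jset T 𝔄 (k + 1)) : HasOm T A :=
  ⟨hA.2.1, hA.2.2.1, hA.2.2.2.1⟩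


lemma mainlemma (T : H →ₗ.[ℂ] H) (hdense : Dense (T.domain : Set H))
    (𝔄 : Subalgebra ℂ (H →L[ℂ] H)) (k : ℕ) :
    (∀ A B : H →L[ℂ] H, A ∈ Jset T ↑𝔄 k → B ∈ Jset T ↑𝔄 k →
      A + B ∈ Jset T ↑𝔄 k) ∧
    (∀ (c : ℂ) (A : H →L[ℂ] H), A ∈ Jset T ↑𝔄 k → c • A ∈ Jset T ↑𝔄 k) ∧
    (∀ A B : H →L[ℂ] H, A ∈ Jset T ↑𝔄 k → B ∈ Jset T ↑𝔄 k →
      A * B ∈ Jset T ↑𝔄 k ∧ pnorm T k (A * B) ≤ pnorm T k A * pnorm T k B) ∧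
    (∀ A B : H →L[ℂ] H, A ∈ Jset T ↑𝔄 k → B ∈ Jset T ↑𝔄 k →
      pnorm T k (A + B) ≤ pnorm T k A + pnorm T k B) ∧
    (∀ (c : ℂ) (A : H →L[ℂ] H), A ∈ Jset T ↑𝔄 k →
      pnorm T k (c • A) = ‖c‖ * pnorm T k A) := by
  induction k with
  | zero =>
    refine ⟨fun A B hA hB => 𝔄.add_mem hA hB,
      fun c A hA => 𝔄.smul_mem hA c,
      fun A B hA hB => ⟨𝔄.mul_mem hA hB, norm_mul_le A B⟩,
      fun A B _ _ => norm_add_le A B,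
      fun c A _ => norm_smul c A⟩
  | succ k ih =>
    obtain ⟨ihadd, ihsmul, ihmul, ihtri, ihsc⟩ := ih
    refine ⟨?_, ?_, ?_, ?_, ?_⟩
    · intro A B hA hB
      have hAo := hasOm_of_mem hA; have hBo := hasOm_of_mem hB
      refine ⟨ihadd A B hA.1 hB.1, (hasOm_add hAo hBo).1, (hasOm_add hAo hBo).2.1,
        (hasOm_add hAo hBo).2.2, ?_, ?_, ?_⟩
      · rw [omegaL_add hAo hBo]; exact ihadd _ _ hA.2.2.2.2.1 hB.2.2.2.2.1
      · rw [omegaR_add hdense hAo hBo]; exact ihadd _ _ hA.2.2.2.2.2.1 hB.2.2.2.2.2.1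
      · rw [omegaLR_add hdense hAo hBo]; exact ihadd _ _ hA.2.2.2.2.2.2 hB.2.2.2.2.2.2
    · intro c A hA
      have hAo := hasOm_of_mem hA
      refine ⟨ihsmul c A hA.1, (hasOm_smul hAo).1, (hasOm_smul hAo).2.1,
        (hasOm_smul hAo).2.2, ?_, ?_, ?_⟩
      · rw [omegaL_smul hAo]; exact ihsmul _ _ hA.2.2.2.2.1
      · rw [omegaR_smul hdense hAo]; exact ihsmul _ _ hA.2.2.2.2.2.1
      · rw [omegaLR_smul hdense hAo]; exact ihsmul _ _ hA.2.2.2.2.2.2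
    · intro A B hA hB
      have hAo := hasOm_of_mem hA; have hBo := hasOm_of_mem hB
      constructor
      · refine ⟨(ihmul A B hA.1 hB.1).1, (hasOm_mul hAo hBo).1, (hasOm_mul hAo hBo).2.1,
          (hasOm_mul hAo hBo).2.2, ?_, ?_, ?_⟩
        · rw [omegaL_mul hAo]; exact (ihmul _ _ hA.2.2.2.2.1 hB.1).1
        · rw [omegaR_mul hdense hBo]; exact (ihmul _ _ hA.1 hB.2.2.2.2.2.1).1
        · rw [omegaLR_mul hdense hAo hBo]
          exact (ihmul _ _ hA.2.2.2.2.1 hB.2.2.2.2.2.1).1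
      · show pnorm T k (A*B) + pnorm T k (omegaL T (A*B)) + pnorm T k (omegaR T (A*B))
            + pnorm T k (omegaLR T (A*B)) ≤ _
        rw [omegaL_mul hAo, omegaR_mul hdense hBo, omegaLR_mul hdense hAo hBo]
        have e1 := (ihmul A B hA.1 hB.1).2
        have e2 := (ihmul _ _ hA.2.2.2.2.1 hB.1).2
        have e3 := (ihmul _ _ hA.1 hB.2.2.2.2.2.1).2
        have e4 := (ihmul _ _ hA.2.2.2.2.1 hB.2.2.2.2.2.1).2
        have n1 := pnorm_nonneg T k A
        have n2 := pnorm_nonneg T k (omegaL T A)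
        have n3 := pnorm_nonneg T k (omegaR T A)
        have n4 := pnorm_nonneg T k (omegaLR T A)
        have m1 := pnorm_nonneg T k B
        have m2 := pnorm_nonneg T k (omegaL T B)
        have m3 := pnorm_nonneg T k (omegaR T B)
        have m4 := pnorm_nonneg T k (omegaLR T B)
        show _ ≤ (pnorm T k A + pnorm T k (omegaL T A) + pnorm T k (omegaR T A)
            + pnorm T k (omegaLR T A)) * (pnorm T k B + pnorm T k (omegaL T B)
            + pnorm T k (omegaR T B) + pnorm T k (omegaLR T B))
        nlinarith [mul_nonneg n1 m2, mul_nonneg n1 m4, mul_nonneg n2 m2, mul_nonneg n2 m4,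
          mul_nonneg n3 m1, mul_nonneg n3 m2, mul_nonneg n3 m3, mul_nonneg n3 m4,
          mul_nonneg n4 m1, mul_nonneg n4 m2, mul_nonneg n4 m3, mul_nonneg n4 m4]
    · intro A B hA hB
      have hAo := hasOm_of_mem hA; have hBo := hasOm_of_mem hB
      show pnorm T k (A+B) + pnorm T k (omegaL T (A+B)) + pnorm T k (omegaR T (A+B))
          + pnorm T k (omegaLR T (A+B)) ≤ _
      rw [omegaL_add hAo hBo, omegaR_add hdense hAo hBo, omegaLR_add hdense hAo hBo]
      have e1 := ihtri A B hA.1 hB.1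
      have e2 := ihtri _ _ hA.2.2.2.2.1 hB.2.2.2.2.1
      have e3 := ihtri _ _ hA.2.2.2.2.2.1 hB.2.2.2.2.2.1
      have e4 := ihtri _ _ hA.2.2.2.2.2.2 hB.2.2.2.2.2.2
      show _ ≤ (pnorm T k A + _ + _ + _) + (pnorm T k B + _ + _ + _)
      linarith
    · intro c A hA
      have hAo := hasOm_of_mem hA
      show pnorm T k (c•A) + pnorm T k (omegaL T (c•A)) + pnorm T k (omegaR T (c•A))
          + pnorm T k (omegaLR T (c•A)) = _
      rw [omegaL_smul hAo, omegaR_smul hdense hAo, omegaLR_smul hdense hAo,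
        ihsc c A hA.1, ihsc _ _ hA.2.2.2.2.1, ihsc _ _ hA.2.2.2.2.2.1,
        ihsc _ _ hA.2.2.2.2.2.2]
      show _ = ‖c‖ * (pnorm T k A + pnorm T k (omegaL T A) + pnorm T k (omegaR T A)
          + pnorm T k (omegaLR T A))
      ring

/-- For every `k`, `J_k` is a subalgebra of `𝔄` and `p_k` is a submultiplicative norm
on it dominating the operator norm; moreover `ω^ℓ(AB) = ω^ℓ(A)B`, `ω^r(AB) = A ω^r(B)`
and `ω^{ℓ,r}(AB) = ω^ℓ(A) ω^r(B)` for `A, B ∈ J_1`. -/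
theorem statement9 (T : H →ₗ.[ℂ] H) (hdense : Dense (T.domain : Set H))
    (hTclosed : IsClosed (T.graph : Set (H × H)))
    (𝔄 : Subalgebra ℂ (H →L[ℂ] H)) (h𝔄closed : IsClosed (𝔄 : Set (H →L[ℂ] H)))
    (h𝔄star : ∀ A ∈ 𝔄, ContinuousLinearMap.adjoint A ∈ 𝔄) (k : ℕ) :
    (∀ A B : H →L[ℂ] H, A ∈ Jset T ↑𝔄 k → B ∈ Jset T ↑𝔄 k →
      A + B ∈ Jset T ↑𝔄 k) ∧
    (∀ (c : ℂ) (A : H →L[ℂ] H), A ∈ Jset T ↑𝔄 k → c • A ∈ Jset T ↑𝔄 k) ∧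
    (∀ A B : H →L[ℂ] H, A ∈ Jset T ↑𝔄 k → B ∈ Jset T ↑𝔄 k →
      A * B ∈ Jset T ↑𝔄 k ∧ pnorm T k (A * B) ≤ pnorm T k A * pnorm T k B) ∧
    (∀ A ∈ Jset T ↑𝔄 k, ‖A‖ ≤ pnorm T k A) ∧
    (∀ A B : H →L[ℂ] H, A ∈ Jset T ↑𝔄 k → B ∈ Jset T ↑𝔄 k →
      pnorm T k (A + B) ≤ pnorm T k A + pnorm T k B) ∧
    (∀ (c : ℂ) (A : H →L[ℂ] H), A ∈ Jset T ↑𝔄 k →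
      pnorm T k (c • A) = ‖c‖ * pnorm T k A) ∧
    (∀ A ∈ Jset T ↑𝔄 k, pnorm T k A = 0 → A = 0) ∧
    (∀ A B : H →L[ℂ] H, A ∈ Jset T ↑𝔄 1 → B ∈ Jset T ↑𝔄 1 →
      omegaL T (A * B) = omegaL T A * B ∧ omegaR T (A * B) = A * omegaR T B ∧
      omegaLR T (A * B) = omegaL T A * omegaR T B) := by
  obtain ⟨hadd, hsmul, hmul, htri, hsc⟩ := mainlemma T hdense 𝔄 k
  refine ⟨hadd, hsmul, hmul, fun A _ => norm_le_pnorm T k A, htri, hsc,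
    fun A _ h0 => ?_, fun A B hA hB => ?_⟩
  · have := norm_le_pnorm T k A
    rw [h0] at this
    exact norm_le_zero_iff.mp this
  · have hAo := hasOm_of_mem hA
    have hBo := hasOm_of_mem hB
    exact ⟨omegaL_mul hAo, omegaR_mul hdense hBo, omegaLR_mul hdense hAo hBo⟩
end

section
/- Let H be a complex Hilbert space and let P be a bounded linear operator on H that has a bounded two-sided inverse P^{-1}. Then for every ε > 0 there exists a polynomial f ∈ ℂ[X] such that ‖P^{-1} − P*·f(P·P*)‖ < ε, where P* is the Hilbert-space adjoint of P and f(P·P*) denotes the evaluation of the polynomial f at the operator P·P*. Equivalently, P^{-1} lies in the operator-norm closure of the set {P*·f(P·P*) : f ∈ ℂ[X]}. -/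
set_option maxHeartbeats 1000000
open ContinuousLinearMap Polynomial Finset


/-- If `P` is a bounded operator on a complex Hilbert space with bounded two-sided
inverse `Q = P⁻¹`, then for every `ε > 0` there is a polynomial `f` with
`‖P⁻¹ − P* f(P P*)‖ < ε`; i.e. `P⁻¹` is a norm limit of operators `P* f(P P*)`. -/
theorem statement13 {H : Type*} [NormedAddCommGroup H] [InnerProductSpace ℂ H]
    [CompleteSpace H] (P Q : H →L[ℂ] H) (hPQ : P * Q = 1) (hQP : Q * P = 1)
    (ε : ℝ) (hε : 0 < ε) :
    ∃ f : Polynomial ℂ,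
      ‖Q - ContinuousLinearMap.adjoint P *
          Polynomial.aeval (P * ContinuousLinearMap.adjoint P) f‖ < ε := by
  by_cases hP : P = 0
  · have h1 : (1 : H →L[ℂ] H) = 0 := by rw [← hPQ, hP, zero_mul]
    have hQ0 : Q = 0 := by rw [← mul_one Q, h1, mul_zero]
    exact ⟨0, by simpa [hQ0] using hε⟩
  -- main case
  rw [← ContinuousLinearMap.star_eq_adjoint]
  set A : H →L[ℂ] H := P * star P with hA
  set R : H →L[ℂ] H := star Q * Q with hR
  have hPQ' : star P * star Q = 1 := by rw [← star_mul, hQP, star_one]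
  have hQP' : star Q * star P = 1 := by rw [← star_mul, hPQ, star_one]
  have hAR : A * R = 1 := by
    rw [hA, hR, mul_assoc, ← mul_assoc (star P), hPQ', one_mul, hPQ]
  have hQR : Q = star P * R := by
    rw [hR, ← mul_assoc, hPQ', one_mul]
  -- positivity facts
  have hPn : (0:ℝ) < ‖P‖ := norm_pos_iff.mpr hP
  have hQ : Q ≠ 0 := by
    intro h; rw [h, mul_zero] at hPQ
    exact hP (by rw [← mul_one P, ← hPQ, mul_zero])
  have hQn : (0:ℝ) < ‖Q‖ := norm_pos_iff.mpr hQ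
  have hnt : Nontrivial H := by
    by_contra h
    rw [not_nontrivial_iff_subsingleton] at h
    exact hP (by ext x; exact Subsingleton.elim _ _)
  have hone : ‖(1 : H →L[ℂ] H)‖ = 1 := norm_id
  have hPQge : 1 ≤ ‖P‖ * ‖Q‖ := by
    calc (1:ℝ) = ‖(1 : H →L[ℂ] H)‖ := hone.symm
    _ = ‖P * Q‖ := by rw [hPQ]
    _ ≤ ‖P‖ * ‖Q‖ := norm_mul_le _ _
  set t : ℝ := (‖P‖^2)⁻¹ with ht
  have htpos : 0 < t := by positivity
  set B : H →L[ℂ] H := 1 - (t:ℂ) • A with hB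
  set r : ℝ := 1 - t / ‖Q‖^2 with hr
  have hr0 : 0 ≤ r := by
    rw [hr, ht, sub_nonneg, div_le_one (by positivity)]
    rw [inv_le_iff_one_le_mul₀ (by positivity)]
    nlinarith
  have hr1 : r < 1 := by
    rw [hr]
    have : 0 < t / ‖Q‖^2 := by positivity
    linarith
  -- pointwise estimate : ‖B x‖^2 ≤ r * ‖x‖^2
  have hkey : ∀ x : H, ‖B x‖^2 ≤ r * ‖x‖^2 := by
    intro x
    have hBx : B x = x - (t:ℂ) • (A x) := by
      simp [hB, sub_apply, smul_apply]
    have hinner : inner ℂ x (A x) = (‖star P x‖^2 : ℂ) := by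
      rw [hA]
      have : (P * star P) x = P ((star P) x) := rfl
      rw [this, ContinuousLinearMap.star_eq_adjoint, ← ContinuousLinearMap.adjoint_inner_left]
      rw [inner_self_eq_norm_sq_to_K]
      norm_num
    have hnormsq : ‖B x‖^2 = ‖x‖^2 - 2 * (t * ‖star P x‖^2) + t^2 * ‖A x‖^2 := by
      rw [hBx, @norm_sub_sq ℂ]
      congr 1
      · congr 1
        rw [inner_smul_right, hinner]
        norm_num [← Complex.ofReal_pow, ← Complex.ofReal_mul]
      · rw [norm_smul, mul_pow, Complex.norm_real, Real.norm_eq_abs, sq_abs]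
    have hAx : ‖A x‖ ≤ ‖P‖ * ‖(star P) x‖ := by
      have : A x = P ((star P) x) := rfl
      rw [this]; exact le_opNorm P _
    have hx : ‖x‖ ≤ ‖Q‖ * ‖(star P) x‖ := by
      calc ‖x‖ = ‖star Q ((star P) x)‖ := by
            rw [← ContinuousLinearMap.mul_apply, hQP', ContinuousLinearMap.one_apply]
        _ ≤ ‖star Q‖ * ‖(star P) x‖ := le_opNorm _ _
        _ = ‖Q‖ * ‖(star P) x‖ := by rw [norm_star]
    have htP : t * ‖P‖^2 = 1 := by rw [ht]; field_simp
    have hx2 : ‖x‖^2 ≤ ‖Q‖^2 * ‖(star P) x‖^2 := by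
      nlinarith [norm_nonneg x, norm_nonneg ((star P) x), hQn.le]
    have h1 : t^2 * ‖A x‖^2 ≤ t * ‖(star P) x‖^2 := by
      have hAx2 : ‖A x‖^2 ≤ ‖P‖^2 * ‖(star P) x‖^2 := by
        nlinarith [norm_nonneg (A x), norm_nonneg ((star P) x), hPn.le]
      calc t^2 * ‖A x‖^2 ≤ t^2 * (‖P‖^2 * ‖(star P) x‖^2) := by
            nlinarith [sq_nonneg t, htpos]
        _ = (t * ‖P‖^2) * (t * ‖(star P) x‖^2) := by ring
        _ = t * ‖(star P) x‖^2 := by rw [htP, one_mul]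
    have h2 : t / ‖Q‖^2 * ‖x‖^2 ≤ t * ‖(star P) x‖^2 := by
      rw [div_mul_eq_mul_div, div_le_iff₀ (by positivity)]
      nlinarith [htpos]
    rw [hnormsq, hr]
    nlinarith [h1, h2]
  -- operator norm bound
  have hBnorm : ‖B‖ ≤ Real.sqrt r := by
    refine B.opNorm_le_bound (Real.sqrt_nonneg r) (fun x => ?_)
    calc ‖B x‖ = Real.sqrt (‖B x‖^2) := (Real.sqrt_sq (norm_nonneg _)).symm
      _ ≤ Real.sqrt (r * ‖x‖^2) := Real.sqrt_le_sqrt (hkey x)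
      _ = Real.sqrt r * ‖x‖ := by
          rw [Real.sqrt_mul hr0, Real.sqrt_sq (norm_nonneg _)]
  have hrho1 : Real.sqrt r < 1 := by
    rw [show (1:ℝ) = Real.sqrt 1 by simp]
    exact Real.sqrt_lt_sqrt hr0 hr1
  have hrho0 : 0 ≤ Real.sqrt r := Real.sqrt_nonneg r
  -- choose N
  have hD : (0:ℝ) < ‖P‖ * ‖R‖ + 1 := by positivity
  obtain ⟨N, hN⟩ := exists_pow_lt_of_lt_one
    (show (0:ℝ) < ε / (‖P‖ * ‖R‖ + 1) by positivity) hrho1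
  -- the polynomial
  set M : ℕ := N + 1 with hM
  refine ⟨Polynomial.C (t:ℂ) * ∑ i ∈ Finset.range M, (1 - Polynomial.C (t:ℂ) * Polynomial.X)^i, ?_⟩
  have haeval : Polynomial.aeval A
      (Polynomial.C (t:ℂ) * ∑ i ∈ Finset.range M, (1 - Polynomial.C (t:ℂ) * Polynomial.X)^i)
      = (t:ℂ) • ∑ i ∈ Finset.range M, B^i := by
    rw [map_mul, aeval_C, map_sum]
    simp only [map_pow, map_sub, map_one, map_mul, aeval_C, aeval_X,
      Algebra.algebraMap_eq_smul_one]
    rw [smul_mul_assoc, one_mul]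
    simp only [smul_mul_assoc, one_mul, ← hB]
  have hgeom : (∑ i ∈ Finset.range M, B^i) * (1 - B) = 1 - B^M := by
    have h := geom_sum_mul B M
    have h2 : (∑ i ∈ Finset.range M, B ^ i) * (1 - B)
        = -((∑ i ∈ Finset.range M, B ^ i) * (B - 1)) := by noncomm_ring
    rw [h2, h]; noncomm_ring
  have h1B : (1:H→L[ℂ]H) - B = (t:ℂ) • A := by rw [hB, sub_sub_cancel]
  have hfR : (t:ℂ) • (∑ i ∈ Finset.range M, B^i) = (1 - B^M) * R := by
    rw [← hgeom, mul_assoc, h1B, smul_mul_assoc, hAR, mul_smul_comm, mul_one]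
  rw [haeval, hfR, hQR]
  have hsplit : star P * R - star P * ((1 - B^M) * R) = star P * (B^M * R) := by
    noncomm_ring
  rw [hsplit]
  have hBpow : ‖B^M‖ ≤ (Real.sqrt r)^M :=
    le_trans (norm_pow_le' B (by omega)) (pow_le_pow_left₀ (norm_nonneg B) hBnorm M)
  have hMN : (Real.sqrt r)^M ≤ (Real.sqrt r)^N :=
    pow_le_pow_of_le_one hrho0 hrho1.le (by omega)
  have hlt : (Real.sqrt r)^N * (‖P‖ * ‖R‖ + 1) < ε := (lt_div_iff₀ hD).mp hN
  calc ‖star P * (B^M * R)‖ ≤ ‖star P‖ * ‖B^M * R‖ := norm_mul_le _ _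
    _ ≤ ‖star P‖ * (‖B^M‖ * ‖R‖) :=
        mul_le_mul_of_nonneg_left (norm_mul_le _ _) (norm_nonneg _)
    _ = ‖P‖ * (‖B^M‖ * ‖R‖) := by rw [norm_star]
    _ < ε := by nlinarith [pow_nonneg hrho0 N, pow_nonneg hrho0 M,
        norm_nonneg R, norm_nonneg (B^M), hPn, hMN, hBpow]
end
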